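/- arXiv:2210.15171 — 5 statements merged into one kernel-verified Lean document; each statement's English description precedes it below -/
import Mathlib

section
/- Let A be a nonsingular M-tensor and suppose {x ≥ 0 : A x^{m-1} ≤ b} is nonempty, with maximal nonnegative solution x_max(A,b). If b̃ ≥ b and Ã ≤ A entrywise with Ã still a nonsingular M-tensor, then Ã x^{m-1} = b̃ has a maximal nonnegative solution x_max(Ã,b̃), and x_max(Ã,b̃) ≥ x_max(A,b). -/
open Finset Filter

noncomputable section

/-- Action of an order-(p+1) tensor (p trailing indices):
`(A x^{p})_i = ∑ a_{i i₂ … i_{p+1}} x_{i₂} ⋯ x_{i_{p+1}}`. -/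
def tapp (p n : ℕ) (A : Fin n → (Fin p → Fin n) → ℝ) (x : Fin n → ℝ) : Fin n → ℝ :=
  fun i => ∑ js : Fin p → Fin n, A i js * ∏ j, x (js j)

/-- A `Z`-tensor: all off-diagonal entries are nonpositive. -/
def IsZTensor (p n : ℕ) (A : Fin n → (Fin p → Fin n) → ℝ) : Prop :=
  ∀ i js, (∃ j, js j ≠ i) → A i js ≤ 0

/-- The identity tensor. -/
def identT (p n : ℕ) : Fin n → (Fin p → Fin n) → ℝ :=
  fun i js => if ∀ j, js j = i then 1 else 0

/-- Spectral radius of a tensor: sup of moduli of (real) eigenvalues. -/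
def tensorSpecRad (p n : ℕ) (B : Fin n → (Fin p → Fin n) → ℝ) : ℝ :=
  sSup {r : ℝ | ∃ lam : ℝ, ∃ x : Fin n → ℝ, x ≠ 0 ∧
    (∀ i, tapp p n B x i = lam * x i ^ p) ∧ r = |lam|}

/-- A nonsingular M-tensor: `A = s I − B` with `B ≥ 0` and `s > ρ(B)`. -/
def IsMTensor (p n : ℕ) (A : Fin n → (Fin p → Fin n) → ℝ) : Prop :=
  ∃ s : ℝ, ∃ B : Fin n → (Fin p → Fin n) → ℝ,
    (∀ i js, 0 ≤ B i js) ∧ tensorSpecRad p n B < s ∧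
    ∀ i js, A i js = s * identT p n i js - B i js

/-- The diagonal-part tensor of `A`. -/
def diagT (p n : ℕ) (A : Fin n → (Fin p → Fin n) → ℝ) : Fin n → (Fin p → Fin n) → ℝ :=
  fun i js => if ∀ j, js j = i then A i (fun _ => i) else 0

/-- The majorization matrix of `A`: `M_{ij} = a_{i j … j}`. -/
def majMatrix (p n : ℕ) (A : Fin n → (Fin p → Fin n) → ℝ) : Matrix (Fin n) (Fin n) ℝ :=
  fun i j => A i (fun _ => j)

/-- The "mixed index" part `N = M_tensor − A`: zero on constant trailing tuples,
`−A` elsewhere. -/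
def NPart (p n : ℕ) (A : Fin n → (Fin p → Fin n) → ℝ) : Fin n → (Fin p → Fin n) → ℝ :=
  fun i js => if ∀ j' j'', js j' = js j'' then 0 else -A i js

/-- A nonsingular M-matrix: a Z-matrix with `M y > 0` for some `y > 0`. -/
def IsMMatrix (n : ℕ) (P : Matrix (Fin n) (Fin n) ℝ) : Prop :=
  (∀ i j, i ≠ j → P i j ≤ 0) ∧ ∃ y : Fin n → ℝ, (∀ i, 0 < y i) ∧ ∀ i, 0 < P.mulVec y i

/-- Spectral radius of a real matrix (via its complex spectrum). -/
def matSpecRad (n : ℕ) (J : Matrix (Fin n) (Fin n) ℝ) : ℝ :=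
  sSup {r : ℝ | ∃ μ ∈ spectrum ℂ (J.map (Complex.ofReal ·)), r = ‖μ‖}

/-- Irreducibility of a matrix. -/
def MatIrreducible (n : ℕ) (J : Matrix (Fin n) (Fin n) ℝ) : Prop :=
  ∀ S : Finset (Fin n), S.Nonempty → S ≠ Finset.univ → ∃ i ∈ S, ∃ j, j ∉ S ∧ J i j ≠ 0

lemma sum_prod_pow (p n : ℕ) (x : Fin n → ℝ) :
    (∑ k, x k) ^ p = ∑ js : Fin p → Fin n, ∏ j, x (js j) := by
  calc (∑ k, x k) ^ p = ∏ _j : Fin p, ∑ k, x k := by simp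
    _ = ∑ js ∈ Fintype.piFinset (fun _ : Fin p => (univ : Finset (Fin n))), ∏ j, x (js j) :=
        Finset.prod_univ_sum _ _
    _ = ∑ js : Fin p → Fin n, ∏ j, x (js j) := by rw [Fintype.piFinset_univ]

lemma tapp_smul (p n : ℕ) (B : Fin n → (Fin p → Fin n) → ℝ) (c : ℝ) (x : Fin n → ℝ) (i : Fin n) :
    tapp p n B (c • x) i = c ^ p * tapp p n B x i := by
  unfold tapp
  rw [Finset.mul_sum]
  refine Finset.sum_congr rfl fun js _ => ?_
  simp only [Pi.smul_apply, smul_eq_mul, Finset.prod_mul_distrib, Finset.prod_const]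
  simp [Finset.card_univ]
  ring

lemma tapp_mono (p n : ℕ) (B : Fin n → (Fin p → Fin n) → ℝ) (hB : ∀ i js, 0 ≤ B i js)
    (x y : Fin n → ℝ) (hx : ∀ k, 0 ≤ x k) (hxy : ∀ k, x k ≤ y k) (i : Fin n) :
    tapp p n B x i ≤ tapp p n B y i := by
  refine Finset.sum_le_sum fun js _ => ?_
  refine mul_le_mul_of_nonneg_left ?_ (hB i js)
  exact Finset.prod_le_prod (fun j _ => hx _) (fun j _ => hxy _)

lemma tapp_nonneg (p n : ℕ) (B : Fin n → (Fin p → Fin n) → ℝ) (hB : ∀ i js, 0 ≤ B i js)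
    (x : Fin n → ℝ) (hx : ∀ k, 0 ≤ x k) (i : Fin n) : 0 ≤ tapp p n B x i :=
  Finset.sum_nonneg fun js _ => mul_nonneg (hB i js) (Finset.prod_nonneg fun j _ => hx _)

lemma tapp_entry_mono (p n : ℕ) (B C : Fin n → (Fin p → Fin n) → ℝ)
    (hBC : ∀ i js, B i js ≤ C i js) (x : Fin n → ℝ) (hx : ∀ k, 0 ≤ x k) (i : Fin n) :
    tapp p n B x i ≤ tapp p n C x i :=
  Finset.sum_le_sum fun js _ => mul_le_mul_of_nonneg_right (hBC i js)
    (Finset.prod_nonneg fun j _ => hx _)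

lemma tapp_ident (p n : ℕ) (x : Fin n → ℝ) (i : Fin n) :
    tapp p n (identT p n) x i = x i ^ p := by
  unfold tapp identT
  rw [Finset.sum_eq_single (fun _ : Fin p => i)]
  · simp
  · intro js _ hne
    rw [if_neg, zero_mul]
    intro h
    exact hne (funext h)
  · simp

lemma tapp_decomp (p n : ℕ) (A B : Fin n → (Fin p → Fin n) → ℝ) (s : ℝ)
    (hA : ∀ i js, A i js = s * identT p n i js - B i js) (x : Fin n → ℝ) (i : Fin n) :
    tapp p n A x i = s * x i ^ p - tapp p n B x i := by
  have : tapp p n A x i = s * tapp p n (identT p n) x i - tapp p n B x i := by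
    unfold tapp
    rw [Finset.mul_sum, ← Finset.sum_sub_distrib]
    refine Finset.sum_congr rfl fun js _ => ?_
    rw [hA]
    ring
  rw [this, tapp_ident]

lemma tapp_continuous (p n : ℕ) (B : Fin n → (Fin p → Fin n) → ℝ) (i : Fin n) :
    Continuous fun x => tapp p n B x i :=
  continuous_finset_sum _ fun js _ =>
    continuous_const.mul (continuous_finset_prod _ fun j _ => continuous_apply _)

lemma tapp_add_const (p n : ℕ) (B : Fin n → (Fin p → Fin n) → ℝ) (ε : ℝ)
    (x : Fin n → ℝ) (i : Fin n) :
    tapp p n (fun i js => B i js + ε) x i = tapp p n B x i + ε * (∑ k, x k) ^ p := by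
  unfold tapp
  rw [sum_prod_pow, Finset.mul_sum, ← Finset.sum_add_distrib]
  refine Finset.sum_congr rfl fun js _ => ?_
  ring

lemma tapp_lower (p n : ℕ) (C : Fin n → (Fin p → Fin n) → ℝ) (ε : ℝ)
    (hC : ∀ i js, ε ≤ C i js) (x : Fin n → ℝ) (hx : ∀ k, 0 ≤ x k) (i : Fin n) :
    ε * (∑ k, x k) ^ p ≤ tapp p n C x i := by
  rw [sum_prod_pow, Finset.mul_sum]
  exact Finset.sum_le_sum fun js _ => mul_le_mul_of_nonneg_right (hC i js)
    (Finset.prod_nonneg fun j _ => hx _)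

-- eigenvalue modulus bound
lemma eig_bound (p n : ℕ) (B : Fin n → (Fin p → Fin n) → ℝ) (hB : ∀ i js, 0 ≤ B i js)
    (lam : ℝ) (z : Fin n → ℝ) (hz : z ≠ 0)
    (heig : ∀ i, tapp p n B z i = lam * z i ^ p) :
    |lam| ≤ ∑ i, ∑ js, B i js := by
  obtain ⟨i0, hi0⟩ : ∃ i, z i ≠ 0 := Function.ne_iff.mp hz
  obtain ⟨i, -, hi⟩ := Finset.exists_max_image (univ : Finset (Fin n)) (fun k => |z k|)
    ⟨i0, Finset.mem_univ i0⟩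
  set M := |z i| with hM
  have hMpos : 0 < M := lt_of_lt_of_le (abs_pos.mpr hi0) (hi i0 (Finset.mem_univ i0))
  have key : |lam| * M ^ p ≤ (∑ js, B i js) * M ^ p := by
    have h1 : |lam| * M ^ p = |tapp p n B z i| := by
      rw [heig i, abs_mul, abs_pow]
    rw [h1]
    calc |∑ js : Fin p → Fin n, B i js * ∏ j, z (js j)|
        ≤ ∑ js : Fin p → Fin n, |B i js * ∏ j, z (js j)| := Finset.abs_sum_le_sum_abs _ _
      _ ≤ ∑ js : Fin p → Fin n, B i js * M ^ p := by
          refine Finset.sum_le_sum fun js _ => ?_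
          rw [abs_mul, abs_of_nonneg (hB i js), abs_prod]
          refine mul_le_mul_of_nonneg_left ?_ (hB i js)
          calc ∏ j, |z (js j)| ≤ ∏ _j : Fin p, M :=
              Finset.prod_le_prod (fun j _ => abs_nonneg _) (fun j _ => hi _ (Finset.mem_univ _))
            _ = M ^ p := by simp
      _ = (∑ js, B i js) * M ^ p := by rw [Finset.sum_mul]
  have h2 : |lam| ≤ ∑ js, B i js :=
    le_of_mul_le_mul_right key (pow_pos hMpos p)
  refine h2.trans ?_
  exact Finset.single_le_sum (f := fun k => ∑ js, B k js)
    (fun k _ => Finset.sum_nonneg fun js _ => hB k js) (Finset.mem_univ i)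

lemma continuousOn_sup' {α : Type*} [TopologicalSpace α] {K : Set α} {ι : Type*}
    (s : Finset ι) (hs : s.Nonempty) (f : ι → α → ℝ)
    (h : ∀ i ∈ s, ContinuousOn (f i) K) :
    ContinuousOn (fun x => s.sup' hs (fun i => f i x)) K := by
  induction hs using Finset.Nonempty.cons_induction with
  | singleton a =>
    simp only [Finset.sup'_singleton]
    exact h a (Finset.mem_singleton_self a)
  | cons a s ha hs ih =>
    have hrw : ∀ x, (Finset.cons a s ha).sup' (Finset.cons_nonempty ha) (fun i => f i x)
        = (f a x) ⊔ (s.sup' hs fun i => f i x) := fun x => Finset.sup'_cons hs (fun i => f i x)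
    simp only [hrw]
    exact (h a (by simp)).sup' (ih fun i hi => h i (Finset.mem_cons_of_mem hi))

lemma exists_pos_eigen (p n : ℕ) (hp : 1 ≤ p) (hn : 0 < n)
    (C : Fin n → (Fin p → Fin n) → ℝ) (ε : ℝ) (hε : 0 < ε) (hC : ∀ i js, ε ≤ C i js) :
    ∃ lam : ℝ, ∃ x : Fin n → ℝ, (∀ i, 0 < x i) ∧ (∑ i, x i = 1) ∧
      ∀ i, tapp p n C x i = lam * x i ^ p := by
  have ne : (univ : Finset (Fin n)).Nonempty := ⟨⟨0, hn⟩, Finset.mem_univ _⟩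
  set r : Fin n → (Fin n → ℝ) → ℝ := fun i x => tapp p n C x i / x i ^ p with hr
  set h : (Fin n → ℝ) → ℝ := fun x => univ.sup' ne (fun i => r i x) with hh
  have r_homog : ∀ (c : ℝ), c ≠ 0 → ∀ (x : Fin n → ℝ) i, r i (c • x) = r i x := by
    intro c hc x i
    simp only [hr, tapp_smul, Pi.smul_apply, smul_eq_mul, mul_pow]
    exact mul_div_mul_left _ _ (pow_ne_zero p hc)
  have tapp_lb : ∀ (x : Fin n → ℝ), (∀ k, 0 ≤ x k) → (∑ k, x k) = 1 → ∀ i,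
      ε ≤ tapp p n C x i := by
    intro x hx hs i
    have := tapp_lower p n C ε hC x hx i
    rwa [hs, one_pow, mul_one] at this
  -- base point
  set x0 : Fin n → ℝ := fun _ => (n : ℝ)⁻¹ with hx0
  have hnR : (0:ℝ) < n := Nat.cast_pos.mpr hn
  have hx0pos : ∀ i, 0 < x0 i := fun i => inv_pos.mpr hnR
  have hx0sum : ∑ i, x0 i = 1 := by
    simp [hx0, Finset.sum_const, Finset.card_univ]
    exact mul_inv_cancel₀ hnR.ne'
  set c := h x0 with hc
  have hrc : ∀ (x : Fin n → ℝ) i, r i x ≤ h x := fun x i => Finset.le_sup' (fun k => r k x) (Finset.mem_univ i)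
  have hrx0 : ∀ i, ε / x0 i ^ p ≤ r i x0 := by
    intro i
    exact (div_le_div_iff_of_pos_right (pow_pos (hx0pos i) p)).mpr
      (tapp_lb x0 (fun k => (hx0pos k).le) hx0sum i)
  have hcpos : 0 < c := by
    have i0 : Fin n := ⟨0, hn⟩
    exact lt_of_lt_of_le (div_pos hε (pow_pos (hx0pos i0) p)) ((hrx0 i0).trans (hrc x0 i0))
  have hcx0 : ∀ i, ε ≤ c * x0 i ^ p := by
    intro i
    have h1 : ε / x0 i ^ p ≤ c := (hrx0 i).trans (hrc x0 i)
    rwa [div_le_iff₀ (pow_pos (hx0pos i) p)] at h1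
  -- the compact set K
  set K : Set (Fin n → ℝ) :=
    {x | (∀ i, 0 ≤ x i) ∧ (∑ i, x i = 1) ∧ ∀ i, ε ≤ c * x i ^ p} with hK
  have hKpos : ∀ x ∈ K, ∀ i, 0 < x i := by
    intro x hx i
    have h1 : 0 < c * x i ^ p := lt_of_lt_of_le hε (hx.2.2 i)
    have h2 : 0 < x i ^ p := by nlinarith [pow_nonneg (hx.1 i) p]
    rcases (hx.1 i).lt_or_eq with hlt | heq
    · exact hlt
    · rw [← heq, zero_pow (by omega : p ≠ 0)] at h2
      exact absurd h2 (lt_irrefl 0)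
  have hKclosed : IsClosed K := by
    have : K = {x : Fin n → ℝ | ∀ i, 0 ≤ x i} ∩
        ({x | ∑ i, x i = 1} ∩ {x | ∀ i, ε ≤ c * x i ^ p}) := by
      ext x; simp only [hK, Set.mem_setOf_eq, Set.mem_inter_iff]
    rw [this]
    refine IsClosed.inter ?_ (IsClosed.inter ?_ ?_)
    · rw [Set.setOf_forall]
      exact isClosed_iInter fun i => isClosed_le continuous_const (continuous_apply i)
    · exact isClosed_eq (continuous_finset_sum _ fun i _ => continuous_apply i) continuous_const
    · rw [Set.setOf_forall]
      exact isClosed_iInter fun i =>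
        isClosed_le continuous_const (continuous_const.mul ((continuous_apply i).pow p))
  have hKsub : K ⊆ Set.Icc (0 : Fin n → ℝ) 1 := by
    intro x hx
    constructor
    · intro i; exact hx.1 i
    · intro i
      calc x i ≤ ∑ k, x k := Finset.single_le_sum (fun k _ => hx.1 k) (Finset.mem_univ i)
        _ = 1 := hx.2.1
  have hKcpt : IsCompact K := IsCompact.of_isClosed_subset isCompact_Icc hKclosed hKsub
  have hx0K : x0 ∈ K := ⟨fun i => (hx0pos i).le, hx0sum, hcx0⟩
  have hhcont : ContinuousOn h K := by
    refine continuousOn_sup' univ ne (fun i x => r i x) fun i _ => ?_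
    exact ContinuousOn.div (tapp_continuous p n C i).continuousOn
      ((continuous_apply i).pow p).continuousOn
      (fun x hx => (pow_pos (hKpos x hx i) p).ne')
  obtain ⟨xs, hxsK, hxsmin⟩ := hKcpt.exists_isMinOn ⟨x0, hx0K⟩ hhcont
  -- global minimality over all positive vectors
  have hglob : ∀ z : Fin n → ℝ, (∀ i, 0 < z i) → h xs ≤ h z := by
    intro z hz
    set t := ∑ i, z i with ht
    have htpos : 0 < t := Finset.sum_pos (fun i _ => hz i) ne
    set w := t⁻¹ • z with hw
    have hwz : ∀ i, r i w = r i z := fun i => r_homog t⁻¹ (inv_ne_zero htpos.ne') z i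
    have hwh : h w = h z := Finset.sup'_congr ne rfl fun i _ => hwz i
    have hwpos : ∀ i, 0 < w i := fun i => mul_pos (inv_pos.mpr htpos) (hz i)
    have hwsum : ∑ i, w i = 1 := by
      simp only [hw, Pi.smul_apply, smul_eq_mul, ← Finset.mul_sum]
      exact inv_mul_cancel₀ htpos.ne'
    by_cases hcase : h w ≤ c
    · have hwK : w ∈ K := by
        refine ⟨fun i => (hwpos i).le, hwsum, fun i => ?_⟩
        have h1 : ε ≤ tapp p n C w i := tapp_lb w (fun k => (hwpos k).le) hwsum i
        have h2 : tapp p n C w i = r i w * w i ^ p :=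
          (div_mul_cancel₀ _ (pow_pos (hwpos i) p).ne').symm
        have h3 : r i w * w i ^ p ≤ c * w i ^ p :=
          mul_le_mul_of_nonneg_right ((hrc w i).trans hcase) (pow_nonneg (hwpos i).le p)
        linarith
      exact le_trans (hxsmin hwK) (le_of_eq hwh)
    · push_neg at hcase
      calc h xs ≤ h x0 := hxsmin hx0K
        _ = c := rfl
        _ ≤ h w := hcase.le
        _ = h z := hwh
  set lam := h xs with hlam
  have hr_le : ∀ i, r i xs ≤ lam := fun i => hrc xs i
  -- all ratios are equal at the minimizer
  have heqr : ∀ i, r i xs = lam := by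
    by_contra hcon
    push_neg at hcon
    obtain ⟨j, hj⟩ := hcon
    have hjlt : r j xs < lam := (hr_le j).lt_of_ne hj
    have hxsj : 0 < xs j := hKpos xs hxsK j
    set xd : ℝ → (Fin n → ℝ) := fun δ k => xs k - if k = j then δ else 0 with hxd
    have hxd0 : xd 0 = xs := by funext k; simp [hxd]
    have hxdcont : Continuous fun δ => xd δ := by
      refine continuous_pi fun k => ?_
      by_cases hk : k = j <;> simp [hxd, hk] <;> fun_prop
    set l := nhdsWithin (0:ℝ) (Set.Ioi 0) with hl
    have hδsmall : ∀ᶠ δ in l, δ < xs j := (gt_mem_nhds hxsj).filter_mono nhdsWithin_le_nhds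
    have hδpos : ∀ᶠ δ in l, 0 < δ := eventually_mem_nhdsWithin
    have hkey : ∀ i, ∀ᶠ δ in l, r i (xd δ) < lam := by
      intro i
      by_cases hi : r i xs < lam
      · have hcont : ContinuousAt (fun δ => r i (xd δ)) 0 := by
          have hnum : Continuous fun δ => tapp p n C (xd δ) i :=
            (tapp_continuous p n C i).comp hxdcont
          have hden : Continuous fun δ => (xd δ i) ^ p :=
            ((continuous_apply i).comp hxdcont).pow p
          refine hnum.continuousAt.div hden.continuousAt ?_
          rw [hxd0]
          exact (pow_pos (hKpos xs hxsK i) p).ne'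
        have htend : Filter.Tendsto (fun δ => r i (xd δ)) (nhds 0) (nhds (r i xs)) := by
          have := hcont.tendsto
          rwa [hxd0] at this
        exact (htend.eventually (gt_mem_nhds hi)).filter_mono nhdsWithin_le_nhds
      · have hieq : r i xs = lam := (hr_le i).antisymm (not_lt.mp hi)
        have hij : i ≠ j := by rintro rfl; exact hj hieq
        filter_upwards [hδpos, hδsmall] with δ h0 h1
        have hxdle : ∀ k, xd δ k ≤ xs k := by
          intro k; by_cases hk : k = j <;> simp [hxd, hk] <;> linarith
        have hxdnn : ∀ k, 0 ≤ xd δ k := by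
          intro k; by_cases hk : k = j <;> simp [hxd, hk]
          · linarith
          · exact (hKpos xs hxsK k).le
        have hnum : tapp p n C (xd δ) i < tapp p n C xs i := by
          refine Finset.sum_lt_sum (fun js _ => ?_) ⟨fun _ => j, Finset.mem_univ _, ?_⟩
          · refine mul_le_mul_of_nonneg_left ?_ (le_trans hε.le (hC i js))
            exact Finset.prod_le_prod (fun k _ => hxdnn _) (fun k _ => hxdle _)
          · have hpr1 : ∏ _k : Fin p, (xs j - δ) = (xs j - δ) ^ p := by simp
            have hpr2 : ∏ _k : Fin p, xs j = (xs j) ^ p := by simp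
            have : ∏ k : Fin p, xd δ ((fun _ => j) k) = (xs j - δ) ^ p := by
              simp [hxd]
            rw [this]
            have : ∏ k : Fin p, xs ((fun _ => j) k) = xs j ^ p := by simp
            rw [this]
            refine mul_lt_mul_of_pos_left ?_ (lt_of_lt_of_le hε (hC i _))
            exact pow_lt_pow_left₀ (by linarith) (by linarith) (by omega)
        have hdeq : xd δ i = xs i := by simp [hxd, hij]
        have : r i (xd δ) < r i xs := by
          simp only [hr, hdeq]
          exact (div_lt_div_iff_of_pos_right (pow_pos (hKpos xs hxsK i) p)).mpr hnum
        linarith [hieq]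
    have hall : ∀ᶠ δ in l, ∀ i, r i (xd δ) < lam := Filter.eventually_all.mpr hkey
    obtain ⟨δ, hδall, hδp, hδs⟩ := (hall.and (hδpos.and hδsmall)).exists
    have hdpos : ∀ k, 0 < xd δ k := by
      intro k; by_cases hk : k = j <;> simp [hxd, hk]
      · linarith
      · exact hKpos xs hxsK k
    have h1 : lam ≤ h (xd δ) := hglob _ hdpos
    have h2 : h (xd δ) < lam := (Finset.sup'_lt_iff ne).mpr fun i _ => hδall i
    linarith
  refine ⟨lam, xs, hKpos xs hxsK, hxsK.2.1, fun i => ?_⟩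
  have := heqr i
  rw [hr] at this
  field_simp [(pow_pos (hKpos xs hxsK i) p).ne'] at this
  rw [this, mul_comm]

-- Collatz–Wielandt comparison
lemma cw_le (p n : ℕ) (B C : Fin n → (Fin p → Fin n) → ℝ) (hn : 0 < n)
    (hB : ∀ i js, 0 ≤ B i js) (hBC : ∀ i js, B i js ≤ C i js) (s : ℝ)
    (y : Fin n → ℝ) (hy : ∀ i, 0 ≤ y i) (hy0 : ∃ i, 0 < y i)
    (hsub : ∀ i, s * y i ^ p ≤ tapp p n B y i)
    (x : Fin n → ℝ) (lam : ℝ) (hx : ∀ i, 0 < x i)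
    (heig : ∀ i, tapp p n C x i = lam * x i ^ p) : s ≤ lam := by
  have ne : (univ : Finset (Fin n)).Nonempty := ⟨⟨0, hn⟩, Finset.mem_univ _⟩
  obtain ⟨j, -, hj⟩ := Finset.exists_mem_eq_sup' ne (fun i => y i / x i)
  set t := univ.sup' ne (fun i => y i / x i) with ht
  obtain ⟨i0, hi0⟩ := hy0
  have htpos : 0 < t := lt_of_lt_of_le (div_pos hi0 (hx i0))
    (Finset.le_sup' (fun i => y i / x i) (Finset.mem_univ i0))
  have hyle : ∀ i, y i ≤ t * x i := by
    intro i
    have := Finset.le_sup' (fun i => y i / x i) (Finset.mem_univ i)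
    rw [← ht] at this
    rwa [div_le_iff₀ (hx i)] at this
  have hyj : y j = t * x j := by
    have : t = y j / x j := hj
    rw [this, div_mul_cancel₀ _ (hx j).ne']
  have hyjpos : 0 < y j := by rw [hyj]; exact mul_pos htpos (hx j)
  have key : s * y j ^ p ≤ lam * y j ^ p := by
    calc s * y j ^ p ≤ tapp p n B y j := hsub j
      _ ≤ tapp p n B (t • x) j := by
          refine tapp_mono p n B hB y (t • x) hy (fun k => ?_) j
          simpa using hyle k
      _ ≤ tapp p n C (t • x) j := tapp_entry_mono p n B C hBC _
          (fun k => by simpa using (mul_pos htpos (hx k)).le) j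
      _ = t ^ p * tapp p n C x j := tapp_smul p n C t x j
      _ = t ^ p * (lam * x j ^ p) := by rw [heig j]
      _ = lam * (t * x j) ^ p := by ring
      _ = lam * y j ^ p := by rw [← hyj]
  exact le_of_mul_le_mul_right (by linarith [key]) (pow_pos hyjpos p)

lemma specRad_ge (p n : ℕ) (hp : 1 ≤ p) (hn : 0 < n)
    (B : Fin n → (Fin p → Fin n) → ℝ) (hB : ∀ i js, 0 ≤ B i js) (s : ℝ)
    (y : Fin n → ℝ) (hy : ∀ i, 0 ≤ y i) (hysum : ∑ i, y i = 1)
    (hsub : ∀ i, s * y i ^ p ≤ tapp p n B y i) : s ≤ tensorSpecRad p n B := by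
  -- perturbed eigenpairs
  have hy0 : ∃ i, 0 < y i := by
    by_contra hcon
    push_neg at hcon
    have : ∀ i, y i = 0 := fun i => le_antisymm (hcon i) (hy i)
    rw [Finset.sum_congr rfl (fun i _ => this i)] at hysum
    simp at hysum
  set M : ℝ := (∑ i, ∑ js, B i js) + (n : ℝ) * (n : ℝ) ^ p with hM
  have hchoice : ∀ k : ℕ, ∃ lam : ℝ, ∃ x : Fin n → ℝ, (∀ i, 0 < x i) ∧ (∑ i, x i = 1) ∧
      (∀ i, tapp p n (fun i js => B i js + ((k:ℝ)+1)⁻¹) x i = lam * x i ^ p) := by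
    intro k
    have hε : (0:ℝ) < ((k:ℝ)+1)⁻¹ := by positivity
    exact exists_pos_eigen p n hp hn _ _ hε (fun i js => le_add_of_nonneg_left (hB i js))
  choose lam xx hxpos hxsum heig using hchoice
  have hxne : ∀ k, xx k ≠ 0 := by
    intro k hk
    have := hxsum k
    rw [hk] at this
    simp at this
  have hymem : ∀ k i, 0 ≤ xx k i ∧ xx k i ≤ 1 := by
    intro k i
    refine ⟨(hxpos k i).le, ?_⟩
    calc xx k i ≤ ∑ j, xx k j := Finset.single_le_sum (fun j _ => (hxpos k j).le) (Finset.mem_univ i)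
      _ = 1 := hxsum k
  have hlam_lb : ∀ k, s ≤ lam k := by
    intro k
    exact cw_le p n B (fun i js => B i js + ((k:ℝ)+1)⁻¹) hn hB
      (fun i js => le_add_of_nonneg_right (by positivity)) s y hy hy0 hsub
      (xx k) (lam k) (hxpos k) (heig k)
  have hlam_ub : ∀ k, lam k ≤ M := by
    intro k
    have h1 := eig_bound p n (fun i js => B i js + ((k:ℝ)+1)⁻¹)
      (fun i js => add_nonneg (hB i js) (by positivity)) (lam k) (xx k) (hxne k) (heig k)
    refine (le_abs_self _).trans (h1.trans ?_)
    have h2 : ∀ i : Fin n, ∑ js : Fin p → Fin n, (B i js + ((k:ℝ)+1)⁻¹)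
        = (∑ js, B i js) + (n:ℝ)^p * ((k:ℝ)+1)⁻¹ := by
      intro i
      rw [Finset.sum_add_distrib, Finset.sum_const]
      simp [Finset.card_univ, mul_comm]
    calc (∑ i, ∑ js : Fin p → Fin n, (B i js + ((k:ℝ)+1)⁻¹))
        = (∑ i, ∑ js, B i js) + (n:ℝ) * ((n:ℝ)^p * ((k:ℝ)+1)⁻¹) := by
          rw [Finset.sum_congr rfl (fun i _ => h2 i), Finset.sum_add_distrib, Finset.sum_const]
          simp [Finset.card_univ]
      _ ≤ M := by
          rw [hM]
          have hk1 : ((k:ℝ)+1)⁻¹ ≤ 1 := by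
            rw [inv_le_one_iff₀]; right; linarith [Nat.cast_nonneg (α := ℝ) k]
          have : (n:ℝ) * ((n:ℝ)^p * ((k:ℝ)+1)⁻¹) ≤ (n:ℝ) * (n:ℝ)^p := by
            rw [← mul_assoc]
            calc (n:ℝ) * (n:ℝ)^p * ((k:ℝ)+1)⁻¹ ≤ (n:ℝ) * (n:ℝ)^p * 1 :=
              mul_le_mul_of_nonneg_left hk1 (by positivity)
              _ = (n:ℝ) * (n:ℝ)^p := mul_one _
          linarith
  -- pass to a limit
  set D : Set (ℝ × (Fin n → ℝ)) := (Set.Icc s M) ×ˢ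
    (Set.Icc (0 : Fin n → ℝ) 1 ∩ {x | ∑ i, x i = 1}) with hD
  have hDcpt : IsCompact D := by
    refine IsCompact.prod isCompact_Icc ?_
    refine IsCompact.of_isClosed_subset isCompact_Icc ?_ Set.inter_subset_left
    exact IsClosed.inter isClosed_Icc
      (isClosed_eq (continuous_finset_sum _ fun i _ => continuous_apply i) continuous_const)
  have hmem : ∀ k, (lam k, xx k) ∈ D := by
    intro k
    refine ⟨⟨hlam_lb k, hlam_ub k⟩, ⟨fun i => (hymem k i).1, fun i => (hymem k i).2⟩, hxsum k⟩
  obtain ⟨⟨l0, x0⟩, hmemD, φ, hφ, hconv⟩ := hDcpt.tendsto_subseq hmem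
  have hl0 : Tendsto (fun k => lam (φ k)) atTop (nhds l0) :=
    (continuous_fst.tendsto _).comp hconv
  have hx0' : Tendsto (fun k => xx (φ k)) atTop (nhds x0) :=
    (continuous_snd.tendsto _).comp hconv
  have hεtend : Tendsto (fun k : ℕ => (((φ k):ℝ)+1)⁻¹) atTop (nhds 0) := by
    refine Tendsto.inv_tendsto_atTop ?_
    refine tendsto_atTop_add_const_right _ 1 ?_
    exact tendsto_natCast_atTop_atTop.comp hφ.tendsto_atTop
  have heq0 : ∀ i, tapp p n B x0 i = l0 * x0 i ^ p := by
    intro i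
    have hterm : ∀ k, tapp p n B (xx (φ k)) i + (((φ k):ℝ)+1)⁻¹
        = lam (φ k) * xx (φ k) i ^ p := by
      intro k
      have := heig (φ k) i
      rw [tapp_add_const, hxsum (φ k), one_pow, mul_one] at this
      exact this
    have hlhs : Tendsto (fun k => tapp p n B (xx (φ k)) i + (((φ k):ℝ)+1)⁻¹) atTop
        (nhds (tapp p n B x0 i + 0)) := by
      refine Tendsto.add ?_ hεtend
      exact ((tapp_continuous p n B i).tendsto _).comp hx0'
    have hrhs : Tendsto (fun k => lam (φ k) * xx (φ k) i ^ p) atTop (nhds (l0 * x0 i ^ p)) := by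
      refine Tendsto.mul hl0 ?_
      exact (Tendsto.pow (((continuous_apply i).tendsto _).comp hx0') p)
    have := tendsto_nhds_unique (hlhs.congr (fun k => hterm k)) hrhs
    rw [← this, add_zero]
  have hx0sum : ∑ i, x0 i = 1 := hmemD.2.2
  have hx0ne : x0 ≠ 0 := by
    intro hk
    rw [hk] at hx0sum
    simp at hx0sum
  have hl0s : s ≤ l0 := ge_of_tendsto hl0 (Eventually.of_forall fun k => hlam_lb (φ k))
  -- conclude
  have hmemset : |l0| ∈ {r : ℝ | ∃ lam : ℝ, ∃ x : Fin n → ℝ, x ≠ 0 ∧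
      (∀ i, tapp p n B x i = lam * x i ^ p) ∧ r = |lam|} := ⟨l0, x0, hx0ne, heq0, rfl⟩
  have hbdd : BddAbove {r : ℝ | ∃ lam : ℝ, ∃ x : Fin n → ℝ, x ≠ 0 ∧
      (∀ i, tapp p n B x i = lam * x i ^ p) ∧ r = |lam|} := by
    refine ⟨∑ i, ∑ js, B i js, fun r hr => ?_⟩
    obtain ⟨mu, z, hz, hz2, rfl⟩ := hr
    exact eig_bound p n B hB mu z hz hz2
  calc s ≤ l0 := hl0s
    _ ≤ |l0| := le_abs_self l0
    _ ≤ tensorSpecRad p n B := le_csSup hbdd hmemset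

lemma feasible_bdd (p n : ℕ) (hp : 1 ≤ p) (s : ℝ) (B : Fin n → (Fin p → Fin n) → ℝ)
    (hB : ∀ i js, 0 ≤ B i js) (hs : tensorSpecRad p n B < s) (bt : Fin n → ℝ) :
    ∃ R : ℝ, ∀ x : Fin n → ℝ, (∀ i, 0 ≤ x i) →
      (∀ i, s * x i ^ p - tapp p n B x i ≤ bt i) → ∀ i, x i ≤ R := by
  rcases Nat.eq_zero_or_pos n with hn | hn
  · exact ⟨0, fun x _ _ i => by subst hn; exact i.elim0⟩
  by_contra hcon
  push_neg at hcon
  have hch : ∀ k : ℕ, ∃ x : Fin n → ℝ, (∀ i, 0 ≤ x i) ∧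
      (∀ i, s * x i ^ p - tapp p n B x i ≤ bt i) ∧ ∃ i, (k:ℝ) < x i := by
    intro k
    obtain ⟨x, h1, h2, i, h3⟩ := hcon (k:ℝ)
    exact ⟨x, h1, h2, i, h3⟩
  choose xx hxnn hxfeas hxbig using hch
  set t : ℕ → ℝ := fun k => ∑ i, xx k i with htdef
  have htbig : ∀ k : ℕ, (k:ℝ) < t k := by
    intro k
    obtain ⟨i, hi⟩ := hxbig k
    exact lt_of_lt_of_le hi (Finset.single_le_sum (fun j _ => hxnn k j) (Finset.mem_univ i))
  have htpos : ∀ k, 0 < t k := fun k => lt_of_le_of_lt (Nat.cast_nonneg k) (htbig k)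
  set yy : ℕ → (Fin n → ℝ) := fun k => (t k)⁻¹ • xx k with hyy
  have hynn : ∀ k i, 0 ≤ yy k i := fun k i =>
    mul_nonneg (inv_pos.mpr (htpos k)).le (hxnn k i)
  have hysum : ∀ k, ∑ i, yy k i = 1 := by
    intro k
    simp only [hyy, Pi.smul_apply, smul_eq_mul, ← Finset.mul_sum]
    exact inv_mul_cancel₀ (htpos k).ne'
  have hyfeas : ∀ k i, s * yy k i ^ p ≤ tapp p n B (yy k) i + bt i * ((t k)⁻¹) ^ p := by
    intro k i
    have h1 := hxfeas k i
    have h2 : ((t k)⁻¹) ^ p > 0 := pow_pos (inv_pos.mpr (htpos k)) p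
    have h3 : (s * xx k i ^ p - tapp p n B (xx k) i) * ((t k)⁻¹) ^ p ≤ bt i * ((t k)⁻¹) ^ p :=
      mul_le_mul_of_nonneg_right h1 h2.le
    have h4 : tapp p n B (yy k) i = ((t k)⁻¹) ^ p * tapp p n B (xx k) i := tapp_smul p n B _ _ i
    have h5 : yy k i ^ p = ((t k)⁻¹) ^ p * xx k i ^ p := by
      simp only [hyy, Pi.smul_apply, smul_eq_mul, mul_pow]
    rw [h4, h5]
    nlinarith [h3]
  -- compactness
  set D : Set (Fin n → ℝ) := Set.Icc (0 : Fin n → ℝ) 1 ∩ {x | ∑ i, x i = 1} with hD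
  have hDcpt : IsCompact D := by
    refine IsCompact.of_isClosed_subset isCompact_Icc ?_ Set.inter_subset_left
    exact IsClosed.inter isClosed_Icc
      (isClosed_eq (continuous_finset_sum _ fun i _ => continuous_apply i) continuous_const)
  have hmem : ∀ k, yy k ∈ D := by
    intro k
    refine ⟨⟨fun i => hynn k i, fun i => ?_⟩, hysum k⟩
    calc yy k i ≤ ∑ j, yy k j := Finset.single_le_sum (fun j _ => hynn k j) (Finset.mem_univ i)
      _ = 1 := hysum k
  obtain ⟨y0, hy0D, φ, hφ, hconv⟩ := hDcpt.tendsto_subseq hmem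
  have httend : Tendsto (fun k => ((t (φ k))⁻¹) ^ p) atTop (nhds 0) := by
    have h1 : Tendsto (fun k => t (φ k)) atTop atTop := by
      refine tendsto_atTop_mono (fun k => ?_) tendsto_natCast_atTop_atTop
      calc ((k:ℕ):ℝ) ≤ ((φ k : ℕ):ℝ) := Nat.cast_le.mpr hφ.le_apply
        _ ≤ t (φ k) := (htbig (φ k)).le
    have h2 : Tendsto (fun k => (t (φ k))⁻¹) atTop (nhds 0) := h1.inv_tendsto_atTop
    have h3 := h2.pow p
    rwa [zero_pow (by omega : p ≠ 0)] at h3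
  have hsub : ∀ i, s * y0 i ^ p ≤ tapp p n B y0 i := by
    intro i
    have hlhs : Tendsto (fun k => s * yy (φ k) i ^ p) atTop (nhds (s * y0 i ^ p)) :=
      Tendsto.mul tendsto_const_nhds
        ((((continuous_apply i).tendsto _).comp hconv).pow p)
    have hrhs : Tendsto (fun k => tapp p n B (yy (φ k)) i + bt i * ((t (φ k))⁻¹) ^ p) atTop
        (nhds (tapp p n B y0 i + bt i * 0)) :=
      Tendsto.add (((tapp_continuous p n B i).tendsto _).comp hconv)
        (Tendsto.mul tendsto_const_nhds httend)
    have := le_of_tendsto_of_tendsto' hlhs hrhs (fun k => hyfeas (φ k) i)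
    rwa [mul_zero, add_zero] at this
  have := specRad_ge p n hp hn B hB s y0 (fun i => hy0D.1.1 i) hy0D.2 hsub
  linarith

theorem stmt9_aux (p n : ℕ) (hp : 1 ≤ p)
    (A At : Fin n → (Fin p → Fin n) → ℝ)
    (hAt : IsMTensor p n At)
    (hAle : ∀ i js, At i js ≤ A i js)
    (b bt : Fin n → ℝ) (hble : b ≤ bt)
    (xmax : Fin n → ℝ) (hxmax : 0 ≤ xmax ∧ tapp p n A xmax = b ∧
      ∀ y : Fin n → ℝ, 0 ≤ y → tapp p n A y = b → y ≤ xmax) :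
    ∃ xmt : Fin n → ℝ, 0 ≤ xmt ∧ tapp p n At xmt = bt ∧
      (∀ y : Fin n → ℝ, 0 ≤ y → tapp p n At y = bt → y ≤ xmt) ∧
      xmax ≤ xmt := by
  obtain ⟨hxm0, hxmeq, -⟩ := hxmax
  obtain ⟨st, Bt, hBt0, hst, hdec⟩ := hAt
  rcases Nat.eq_zero_or_pos n with hn | hn
  · subst hn
    refine ⟨xmax, hxm0, ?_, fun y _ _ => ?_, le_refl _⟩
    · funext i; exact i.elim0
    · intro i; exact i.elim0
  set F : Set (Fin n → ℝ) := {x | (∀ i, 0 ≤ x i) ∧ ∀ i, tapp p n At x i ≤ bt i} with hF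
  have hxmaxF : xmax ∈ F := by
    refine ⟨fun i => hxm0 i, fun i => ?_⟩
    calc tapp p n At xmax i ≤ tapp p n A xmax i :=
        tapp_entry_mono p n At A hAle xmax (fun k => hxm0 k) i
      _ = b i := by rw [hxmeq]
      _ ≤ bt i := hble i
  obtain ⟨R, hR⟩ := feasible_bdd p n hp st Bt hBt0 hst bt
  have hFbd : ∀ x ∈ F, ∀ i, x i ≤ R := by
    intro x hx i
    refine hR x (fun j => hx.1 j) (fun j => ?_) i
    have := hx.2 j
    rwa [tapp_decomp p n At Bt st hdec] at this
  set ξ : Fin n → ℝ := fun i => sSup ((fun x => x i) '' F) with hxi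
  have hbddi : ∀ i, BddAbove ((fun x => x i) '' F) := fun i =>
    ⟨R, by rintro r ⟨x, hx, rfl⟩; exact hFbd x hx i⟩
  have hub : ∀ x ∈ F, ∀ i, x i ≤ ξ i := fun x hx i =>
    le_csSup (hbddi i) ⟨x, hx, rfl⟩
  have hmaxcl : ∀ x ∈ F, ∀ y ∈ F, (fun i => max (x i) (y i)) ∈ F := by
    intro x hx y hy
    refine ⟨fun i => le_max_of_le_left (hx.1 i), fun i => ?_⟩
    rw [tapp_decomp p n At Bt st hdec]
    rcases le_total (y i) (x i) with hc | hc
    · have hmx : max (x i) (y i) = x i := max_eq_left hc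
      have h2 : tapp p n Bt x i ≤ tapp p n Bt (fun k => max (x k) (y k)) i :=
        tapp_mono p n Bt hBt0 x _ (fun k => hx.1 k) (fun k => le_max_left _ _) i
      have h3 := hx.2 i
      rw [tapp_decomp p n At Bt st hdec] at h3
      rw [hmx]
      linarith
    · have hmx : max (x i) (y i) = y i := max_eq_right hc
      have h2 : tapp p n Bt y i ≤ tapp p n Bt (fun k => max (x k) (y k)) i :=
        tapp_mono p n Bt hBt0 y _ (fun k => hy.1 k) (fun k => le_max_right _ _) i
      have h3 := hy.2 i
      rw [tapp_decomp p n At Bt st hdec] at h3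
      rw [hmx]
      linarith
  have happrox : ∀ ε : ℝ, 0 < ε → ∀ S : Finset (Fin n), ∃ w ∈ F, ∀ i ∈ S, ξ i - ε < w i := by
    intro ε hε S
    induction S using Finset.induction_on with
    | empty => exact ⟨xmax, hxmaxF, by simp⟩
    | @insert a S' ha ih =>
      obtain ⟨w, hwF, hw⟩ := ih
      have hne' : ((fun x => x a) '' F).Nonempty := ⟨xmax a, xmax, hxmaxF, rfl⟩
      have hlt : ξ a - ε < sSup ((fun x => x a) '' F) := sub_lt_self _ hε
      obtain ⟨r, ⟨v, hvF, rfl⟩, hva⟩ := exists_lt_of_lt_csSup hne' hlt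
      refine ⟨fun i => max (w i) (v i), hmaxcl w hwF v hvF, fun i hi => ?_⟩
      rcases Finset.mem_insert.mp hi with rfl | hi'
      · exact lt_of_lt_of_le hva (le_max_right _ _)
      · exact lt_of_lt_of_le (hw i hi') (le_max_left _ _)
  have hchw : ∀ k : ℕ, ∃ w ∈ F, ∀ i, ξ i - ((k:ℝ)+1)⁻¹ < w i := by
    intro k
    obtain ⟨w, hwF, hw⟩ := happrox ((k:ℝ)+1)⁻¹ (by positivity) Finset.univ
    exact ⟨w, hwF, fun i => hw i (Finset.mem_univ i)⟩
  choose w hwF hwlb using hchw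
  have htend : Tendsto w atTop (nhds ξ) := by
    rw [tendsto_pi_nhds]
    intro i
    have hlow : Tendsto (fun k : ℕ => ξ i - ((k:ℝ)+1)⁻¹) atTop (nhds (ξ i - 0)) := by
      refine Tendsto.sub tendsto_const_nhds ?_
      exact Tendsto.inv_tendsto_atTop (tendsto_atTop_add_const_right _ 1 tendsto_natCast_atTop_atTop)
    rw [sub_zero] at hlow
    refine tendsto_of_tendsto_of_tendsto_of_le_of_le' hlow tendsto_const_nhds ?_ ?_
    · exact Eventually.of_forall fun k => (hwlb k i).le
    · exact Eventually.of_forall fun k => hub (w k) (hwF k) i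
  have hxiF : ξ ∈ F := by
    constructor
    · intro i
      exact le_trans (hxm0 i) (hub xmax hxmaxF i)
    · intro i
      refine le_of_tendsto (((tapp_continuous p n At i).tendsto _).comp htend) ?_
      exact Eventually.of_forall fun k => (hwF k).2 i
  have hxisol : ∀ i, tapp p n At ξ i = bt i := by
    by_contra hcon
    push_neg at hcon
    obtain ⟨i0, hi0⟩ := hcon
    have hlt : tapp p n At ξ i0 < bt i0 := (hxiF.2 i0).lt_of_ne hi0
    set ζ : ℝ → (Fin n → ℝ) := fun δ k => ξ k + if k = i0 then δ else 0 with hzeta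
    have hz0 : ζ 0 = ξ := by funext k; simp [hzeta]
    have hzcont : Continuous fun δ => ζ δ := by
      refine continuous_pi fun k => ?_
      by_cases hk : k = i0 <;> simp [hzeta, hk] <;> fun_prop
    have hev : ∀ᶠ δ in nhdsWithin (0:ℝ) (Set.Ioi 0), tapp p n At (ζ δ) i0 < bt i0 := by
      have htd : Tendsto (fun δ => tapp p n At (ζ δ) i0) (nhds 0) (nhds (tapp p n At ξ i0)) := by
        have h1 := ((tapp_continuous p n At i0).comp hzcont).continuousAt (x := (0:ℝ))
        have h2 := h1.tendsto
        rwa [Function.comp_apply, hz0] at h2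
      exact (htd.eventually (gt_mem_nhds hlt)).filter_mono nhdsWithin_le_nhds
    obtain ⟨δ, hdlt, hdpos⟩ := (hev.and eventually_mem_nhdsWithin).exists
    have hdpos : (0:ℝ) < δ := hdpos
    have hzF : ζ δ ∈ F := by
      constructor
      · intro k
        by_cases hk : k = i0 <;> simp [hzeta, hk]
        · exact le_trans (hxiF.1 i0) (le_add_of_nonneg_right hdpos.le)
        · exact hxiF.1 k
      · intro i
        by_cases hi : i = i0
        · subst hi; exact hdlt.le
        · rw [tapp_decomp p n At Bt st hdec]
          have h2 : tapp p n Bt ξ i ≤ tapp p n Bt (ζ δ) i := by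
            refine tapp_mono p n Bt hBt0 ξ (ζ δ) (fun k => hxiF.1 k) (fun k => ?_) i
            by_cases hk : k = i0 <;> simp [hzeta, hk]
            exact hdpos.le
          have h3 := hxiF.2 i
          rw [tapp_decomp p n At Bt st hdec] at h3
          have hzi : ζ δ i = ξ i := by simp [hzeta, hi]
          rw [hzi]
          linarith
    have h4 := hub (ζ δ) hzF i0
    have h5 : ζ δ i0 = ξ i0 + δ := by simp [hzeta]
    rw [h5] at h4
    linarith
  refine ⟨ξ, ?_, funext hxisol, fun y hy0 hyeq => ?_, ?_⟩
  · intro i; exact hxiF.1 i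
  · have hyF : y ∈ F := ⟨fun i => hy0 i, fun i => (congrFun hyeq i).le⟩
    intro i
    exact hub y hyF i
  · intro i
    exact hub xmax hxmaxF i


/-- monotone dependence of the maximal nonnegative solution: increasing
`b` and decreasing the nonsingular M-tensor `A` (staying a nonsingular M-tensor)
preserves existence of the maximal nonnegative solution and increases it. -/
theorem stmt9 (m n : ℕ) (hm : 2 ≤ m)
    (A At : Fin n → (Fin (m-1) → Fin n) → ℝ)
    (hA : IsMTensor (m-1) n A) (hAt : IsMTensor (m-1) n At)
    (hAle : ∀ i js, At i js ≤ A i js)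
    (b bt : Fin n → ℝ) (hble : b ≤ bt)
    (hne : ∃ x : Fin n → ℝ, 0 ≤ x ∧ tapp (m-1) n A x ≤ b)
    (xmax : Fin n → ℝ) (hxmax : 0 ≤ xmax ∧ tapp (m-1) n A xmax = b ∧
      ∀ y : Fin n → ℝ, 0 ≤ y → tapp (m-1) n A y = b → y ≤ xmax) :
    ∃ xmt : Fin n → ℝ, 0 ≤ xmt ∧ tapp (m-1) n At xmt = bt ∧
      (∀ y : Fin n → ℝ, 0 ≤ y → tapp (m-1) n At y = bt → y ≤ xmt) ∧
      xmax ≤ xmt :=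
  stmt9_aux (m-1) n (by omega) A At hAt hAle b bt hble xmax hxmax

end
end

section
/- Under the setup of the minimal-solution splitting iteration (Z-tensor A, b ≥ 0, S_g nonempty, A's majorization matrix M, tensor splitting A = M_tensor − N with N ≥ 0): let (x_k) and (x̂_k) be generated by P x_{k+1}^{[m-1]} = Q x_k^{[m-1]} + N x_k^{m-1} + b and P̂ x̂_{k+1}^{[m-1]} = Q̂ x̂_k^{[m-1]} + N x̂_k^{m-1} + b respectively, where M = P − Q = P̂ − Q̂ with P, P̂ nonsingular M-matrices and Q, Q̂ ≥ 0, starting from x_0 = x̂_0 = 0. If Q̂ ≤ Q entrywise, then x_k ≤ x̂_k for all k ≥ 0. -/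
open Finset Filter

noncomputable section

/-- Monotone vectors map to monotone products under nonnegative matrices. -/
lemma aux_mulVec_mono {n : ℕ} (M : Matrix (Fin n) (Fin n) ℝ)
    (hM : ∀ i j, 0 ≤ M i j) {u v : Fin n → ℝ} (h : ∀ j, u j ≤ v j) (i : Fin n) :
    M.mulVec u i ≤ M.mulVec v i := by
  unfold Matrix.mulVec dotProduct
  exact Finset.sum_le_sum fun j _ => mul_le_mul_of_nonneg_left (h j) (hM i j)

lemma aux_tapp_mono {p n : ℕ} (B : Fin n → (Fin p → Fin n) → ℝ)
    (hB : ∀ i js, 0 ≤ B i js) {u v : Fin n → ℝ}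
    (hu : ∀ j, 0 ≤ u j) (h : ∀ j, u j ≤ v j) (i : Fin n) :
    tapp p n B u i ≤ tapp p n B v i := by
  unfold tapp
  refine Finset.sum_le_sum fun js _ => mul_le_mul_of_nonneg_left ?_ (hB i js)
  exact Finset.prod_le_prod (fun j _ => hu (js j)) (fun j _ => h (js j))

/-- An M-matrix (in the semipositivity sense) is monotone. -/
lemma aux_mmono {n : ℕ} {P : Matrix (Fin n) (Fin n) ℝ} (hP : IsMMatrix n P)
    {w : Fin n → ℝ} (h : ∀ i, 0 ≤ P.mulVec w i) : ∀ i, 0 ≤ w i := by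
  by_contra hc
  push_neg at hc
  obtain ⟨i, hi⟩ := hc
  obtain ⟨hZ, y, hy, hPy⟩ := hP
  obtain ⟨i0, -, hmax⟩ := Finset.exists_max_image Finset.univ
    (fun j => -w j / y j) ⟨i, Finset.mem_univ i⟩
  set t : ℝ := -w i0 / y i0 with ht
  have htpos : 0 < t := lt_of_lt_of_le
    (div_pos (neg_pos.mpr hi) (hy i)) (hmax i (Finset.mem_univ i))
  set z : Fin n → ℝ := fun j => w j + t * y j with hz
  have hznn : ∀ j, 0 ≤ z j := by
    intro j
    have := hmax j (Finset.mem_univ j)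
    have h1 : -w j ≤ t * y j := by
      rw [div_le_iff₀ (hy j)] at this
      linarith [this]
    simp only [hz]; linarith
  have hzi0 : z i0 = 0 := by
    simp only [hz, ht]
    rw [div_mul_cancel₀ _ (hy i0).ne']
    ring
  have hpos : 0 < P.mulVec z i0 := by
    have : P.mulVec z = P.mulVec w + t • P.mulVec y := by
      rw [hz]
      have : (fun j => w j + t * y j) = w + t • y := by
        funext j; simp [mul_comm]
      rw [this, Matrix.mulVec_add, Matrix.mulVec_smul]
    rw [this]
    have := h i0
    have := hPy i0
    simp only [Pi.add_apply, Pi.smul_apply, smul_eq_mul]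
    nlinarith
  have hnonpos : P.mulVec z i0 ≤ 0 := by
    unfold Matrix.mulVec dotProduct
    refine Finset.sum_nonpos fun j _ => ?_
    by_cases hji : j = i0
    · subst hji; rw [hzi0, mul_zero]
    · exact mul_nonpos_of_nonpos_of_nonneg (hZ i0 j (Ne.symm hji)) (hznn j)
  linarith

/-- comparison of two splittings `M = P − Q = P̂ − Q̂` for the increasing
iteration from `x₀ = x̂₀ = 0`: if `Q̂ ≤ Q` entrywise then `x_k ≤ x̂_k` for all `k`. -/
theorem stmt12 (m n : ℕ) (hm : 2 ≤ m) (A : Fin n → (Fin (m-1) → Fin n) → ℝ)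
    (hA : IsZTensor (m-1) n A) (b : Fin n → ℝ) (hb : 0 ≤ b)
    (hne : ∃ x : Fin n → ℝ, 0 ≤ x ∧ b ≤ tapp (m-1) n A x)
    (P Q Ph Qh : Matrix (Fin n) (Fin n) ℝ)
    (hP : IsMMatrix n P) (hPh : IsMMatrix n Ph)
    (hQ : ∀ i j, 0 ≤ Q i j) (hQh : ∀ i j, 0 ≤ Qh i j)
    (hsplit : majMatrix (m-1) n A = P - Q)
    (hsplith : majMatrix (m-1) n A = Ph - Qh)
    (x xh : ℕ → Fin n → ℝ) (hx0 : x 0 = 0) (hxh0 : xh 0 = 0)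
    (hxpos : ∀ k, 0 ≤ x k) (hxhpos : ∀ k, 0 ≤ xh k)
    (hiter : ∀ k i, P.mulVec (fun j => x (k+1) j ^ (m-1)) i =
      Q.mulVec (fun j => x k j ^ (m-1)) i +
        tapp (m-1) n (NPart (m-1) n A) (x k) i + b i)
    (hiterh : ∀ k i, Ph.mulVec (fun j => xh (k+1) j ^ (m-1)) i =
      Qh.mulVec (fun j => xh k j ^ (m-1)) i +
        tapp (m-1) n (NPart (m-1) n A) (xh k) i + b i)
    (hQle : ∀ i j, Qh i j ≤ Q i j) :
    ∀ k, x k ≤ xh k := by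
  have hm1 : m - 1 ≠ 0 := by omega
  have hNnn : ∀ i js, 0 ≤ NPart (m-1) n A i js := by
    intro i js
    unfold NPart
    by_cases hc : ∀ j' j'', js j' = js j''
    · rw [if_pos hc]
    · rw [if_neg hc]
      push_neg at hc
      obtain ⟨j', j'', hj⟩ := hc
      have : ∃ j, js j ≠ i := by
        by_contra hall
        push_neg at hall
        exact hj ((hall j').trans (hall j'').symm)
      linarith [hA i js this]
  -- de-powering
  have depow : ∀ u v : Fin n → ℝ, 0 ≤ u → 0 ≤ v →
      (∀ j, u j ^ (m-1) ≤ v j ^ (m-1)) → u ≤ v := by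
    intro u v hu hv h j
    exact (pow_le_pow_iff_left₀ (hu j) (hv j) hm1).mp (h j)
  -- the x sequence is increasing
  have hxinc : ∀ k, x k ≤ x (k+1) := by
    intro k
    induction k with
    | zero => rw [hx0]; exact hxpos 1
    | succ k ih =>
      refine depow _ _ (hxpos _) (hxpos _) ?_
      have key : ∀ i, 0 ≤ P.mulVec (fun j => x (k+2) j ^ (m-1)) i -
          P.mulVec (fun j => x (k+1) j ^ (m-1)) i := by
        intro i
        rw [hiter (k+1) i, hiter k i]
        have h1 := aux_mulVec_mono Q hQ (fun j =>
          pow_le_pow_left₀ (hxpos k j) (ih j) (m-1)) i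
        have h2 := aux_tapp_mono (NPart (m-1) n A) hNnn (fun j => hxpos k j)
          (fun j => ih j) i
        linarith
      intro j
      have := aux_mmono hP (w := fun j => x (k+2) j ^ (m-1) - x (k+1) j ^ (m-1))
        (by intro i
            have := key i
            rwa [show (fun j => x (k+2) j ^ (m-1) - x (k+1) j ^ (m-1)) =
              (fun j => x (k+2) j ^ (m-1)) - (fun j => x (k+1) j ^ (m-1)) from rfl,
              Matrix.mulVec_sub]) j
      linarith [this]
  -- Ph = P - (Q - Qh)
  have hPheq : Ph = P - (Q - Qh) := by
    have h := hsplit.symm.trans hsplith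
    have : P - Q = Ph - Qh := h
    ext i j
    have h2 := Matrix.ext_iff.mpr this i j
    simp only [Matrix.sub_apply] at h2 ⊢
    linarith
  intro k
  induction k with
  | zero => rw [hx0, hxh0]
  | succ k ih =>
    refine depow _ _ (hxpos _) (hxhpos _) ?_
    have key : ∀ i, 0 ≤ Ph.mulVec (fun j => xh (k+1) j ^ (m-1)) i -
        Ph.mulVec (fun j => x (k+1) j ^ (m-1)) i := by
      intro i
      have e1 : Ph.mulVec (fun j => x (k+1) j ^ (m-1)) i =
          P.mulVec (fun j => x (k+1) j ^ (m-1)) i -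
          (Q - Qh).mulVec (fun j => x (k+1) j ^ (m-1)) i := by
        rw [hPheq, Matrix.sub_mulVec]
        rfl
      rw [hiterh k i, e1, hiter k i]
      -- bound pieces
      have hQQh : ∀ i j, 0 ≤ (Q - Qh) i j := by
        intro i j; simp only [Matrix.sub_apply]; linarith [hQle i j]
      -- Q = Qh + (Q - Qh)
      have eQ : Q.mulVec (fun j => x k j ^ (m-1)) i =
          Qh.mulVec (fun j => x k j ^ (m-1)) i +
          (Q - Qh).mulVec (fun j => x k j ^ (m-1)) i := by
        rw [show Q = Qh + (Q - Qh) by abel, Matrix.add_mulVec]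
        simp [show Qh + (Q - Qh) - Qh = Q - Qh by abel]
      have h1 := aux_mulVec_mono Qh hQh (fun j =>
        pow_le_pow_left₀ (hxpos k j) (ih j) (m-1)) i
      have h2 := aux_mulVec_mono (Q - Qh) hQQh (fun j =>
        pow_le_pow_left₀ (hxpos k j) (hxinc k j) (m-1)) i
      have h3 := aux_tapp_mono (NPart (m-1) n A) hNnn (fun j => hxpos k j)
        (fun j => ih j) i
      linarith
    intro j
    have := aux_mmono hPh (w := fun j => xh (k+1) j ^ (m-1) - x (k+1) j ^ (m-1))
      (by intro i
          have := key i
          rwa [show (fun j => xh (k+1) j ^ (m-1) - x (k+1) j ^ (m-1)) =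
            (fun j => xh (k+1) j ^ (m-1)) - (fun j => x (k+1) j ^ (m-1)) from rfl,
            Matrix.mulVec_sub]) j
    linarith [this]

end
end

section
/- Let P be an n×n nonsingular M-matrix, L a nonnegative mth-order n-dimensional tensor, b ≥ 0, and x̄ > 0 a vector with P x̄^{[m-1]} = L x̄^{m-1} + b. Let φ(x) = (P^{-1}(L x^{m-1} + b))^{[1/(m-1)]} and let the nonnegative matrix J = diag(x̄^{[−(m−2)]}) P^{-1} L̄ x̄^{m-2} be its Jacobian at x̄ (L̄ the semi-symmetrization of L). Then J x̄ = x̄ − diag(x̄^{[−(m−2)]}) P^{-1} b; consequently, if P^{-1} b > 0 then ρ(J) < 1. -/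
open Finset Filter

noncomputable section

/- AUX -/

lemma aux_mmatrix_sol_nonneg {n : ℕ} (P : Matrix (Fin n) (Fin n) ℝ)
    (hZ : ∀ i j, i ≠ j → P i j ≤ 0) (y : Fin n → ℝ) (hy : ∀ i, 0 < y i)
    (hPy : ∀ i, 0 < P.mulVec y i) (x : Fin n → ℝ) (hx : ∀ i, 0 ≤ P.mulVec x i) :
    ∀ i, 0 ≤ x i := by
  by_contra h
  push_neg at h
  obtain ⟨i1, hi1⟩ := h
  have hne : (Finset.univ : Finset (Fin n)).Nonempty := ⟨i1, mem_univ i1⟩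
  obtain ⟨i0, _, hi0⟩ := Finset.exists_min_image univ (fun i => x i / y i) hne
  set t := x i0 / y i0 with ht
  have htneg : t < 0 := lt_of_le_of_lt (hi0 i1 (mem_univ i1)) (div_neg_of_neg_of_pos hi1 (hy i1))
  set z : Fin n → ℝ := fun j => x j - t * y j with hz
  have hznn : ∀ j, 0 ≤ z j := by
    intro j
    have h1 : t ≤ x j / y j := hi0 j (mem_univ j)
    have h2 : t * y j ≤ x j := by
      rw [ht] at h1 ⊢
      rw [div_le_div_iff₀ (hy i0) (hy j)] at h1
      rw [div_mul_eq_mul_div, div_le_iff₀ (hy i0)]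
      nlinarith
    simpa [hz] using sub_nonneg.mpr h2
  have hz0 : z i0 = 0 := by
    simp [hz, ht, div_mul_cancel₀ _ (ne_of_gt (hy i0))]
  have hPz : P.mulVec z i0 ≤ 0 := by
    rw [Matrix.mulVec, dotProduct]
    apply Finset.sum_nonpos
    intro j _
    rcases eq_or_ne j i0 with rfl | hne'
    · simp [hz0]
    · exact mul_nonpos_of_nonpos_of_nonneg (hZ i0 j (Ne.symm hne')) (hznn j)
  have hPz' : P.mulVec z i0 = P.mulVec x i0 - t * P.mulVec y i0 := by
    simp only [hz, Matrix.mulVec, dotProduct, mul_sub, Finset.sum_sub_distrib,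
      Finset.mul_sum]
    congr 1
    apply Finset.sum_congr rfl
    intro j _
    ring
  have hpos : 0 < P.mulVec x i0 - t * P.mulVec y i0 := by
    nlinarith [hx i0, hPy i0]
  linarith [hPz, hPz' ▸ hPz]

lemma aux_tapp_symm (q n : ℕ) (L : Fin n → (Fin (q+1) → Fin n) → ℝ) (xb : Fin n → ℝ) (i : Fin n) :
    tapp (q+1) n (fun i js => (∑ σ : Equiv.Perm (Fin (q+1)), L i (js ∘ σ)) / (Nat.factorial (q+1))) xb i
      = tapp (q+1) n L xb i := by
  unfold tapp
  simp only [Finset.sum_div, div_mul_eq_mul_div, ← Finset.sum_div]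
  rw [div_eq_iff (by positivity : ((q+1).factorial : ℝ) ≠ 0)]
  simp only [Finset.sum_mul]
  rw [Finset.sum_comm]
  have : ∀ σ : Equiv.Perm (Fin (q+1)),
      ∑ js : Fin (q+1) → Fin n, L i (js ∘ σ) * ∏ j, xb (js j)
        = ∑ js : Fin (q+1) → Fin n, L i js * ∏ j, xb (js j) := by
    intro σ
    rw [← Equiv.sum_comp (Equiv.arrowCongr σ.symm (Equiv.refl (Fin n)))
      (fun js => L i js * ∏ j, xb (js j))]
    apply Finset.sum_congr rfl
    intro js _
    have h1 : (Equiv.arrowCongr σ.symm (Equiv.refl (Fin n))) js = js ∘ σ := by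
      ext j; simp [Equiv.arrowCongr]
    rw [h1]
    congr 1
    exact (Equiv.prod_comp σ (fun j => xb (js j))).symm
  simp only [this]
  rw [Finset.sum_const, Finset.card_univ, Fintype.card_perm, Fintype.card_fin,
    nsmul_eq_mul, Finset.mul_sum]
  apply Finset.sum_congr rfl
  intro js _
  ring

lemma aux_lmat_eq (q n : ℕ) (Lbar : Fin n → (Fin (q+1) → Fin n) → ℝ) (xb : Fin n → ℝ) (i : Fin n) :
    ∑ j : Fin n, (∑ rest : Fin q → Fin n, Lbar i (Fin.cons j rest) * ∏ r, xb (rest r)) * xb j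
      = tapp (q+1) n Lbar xb i := by
  unfold tapp
  rw [← (Fin.consEquiv (fun _ => Fin n)).sum_comp (fun js => Lbar i js * ∏ j, xb (js j))]
  rw [Fintype.sum_prod_type]
  apply Finset.sum_congr rfl
  intro j _
  rw [Finset.sum_mul]
  apply Finset.sum_congr rfl
  intro rest _
  have : (Fin.consEquiv fun _ => Fin n) (j, rest) = Fin.cons j rest := rfl
  rw [this, Fin.prod_univ_succ]
  simp only [Fin.cons_zero, Fin.cons_succ]
  ring

lemma aux_eigvec (μ : ℂ) (n : ℕ) (M : Matrix (Fin n) (Fin n) ℂ) (h : μ ∈ spectrum ℂ M) :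
    ∃ v, v ≠ 0 ∧ M.mulVec v = μ • v := by
  rw [spectrum.mem_iff] at h
  have hdet : (algebraMap ℂ (Matrix (Fin n) (Fin n) ℂ) μ - M).det = 0 := by
    by_contra hd
    exact h ((Matrix.isUnit_iff_isUnit_det _).mpr (isUnit_iff_ne_zero.mpr hd))
  obtain ⟨v, hv, hveq⟩ := (Matrix.exists_mulVec_eq_zero_iff).mpr hdet
  refine ⟨v, hv, ?_⟩
  rw [Matrix.sub_mulVec, sub_eq_zero] at hveq
  rw [← hveq]
  have h2 : algebraMap ℂ (Matrix (Fin n) (Fin n) ℂ) μ = μ • 1 := by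
    simp [Algebra.algebraMap_eq_smul_one]
  rw [h2, Matrix.smul_mulVec, Matrix.one_mulVec]


/-- with `P x̄^{[m-1]} = L x̄^{m-1} + b` (`m = q+2`, `P` a nonsingular
M-matrix, `L ≥ 0`, `b ≥ 0`, `x̄ > 0`), the Jacobian matrix
`J = diag(x̄^{[-(m-2)]}) P⁻¹ L̄ x̄^{m-2}` satisfies
`J x̄ = x̄ − diag(x̄^{[-(m-2)]}) P⁻¹ b`; hence `ρ(J) < 1` whenever `P⁻¹ b > 0`. -/
theorem stmt14 (q n : ℕ) (P Pinv : Matrix (Fin n) (Fin n) ℝ)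
    (hP : IsMMatrix n P) (hPinv : P * Pinv = 1 ∧ Pinv * P = 1)
    (L : Fin n → (Fin (q+1) → Fin n) → ℝ) (hL : ∀ i js, 0 ≤ L i js)
    (b : Fin n → ℝ) (hb : 0 ≤ b)
    (xb : Fin n → ℝ) (hxb : ∀ i, 0 < xb i)
    (heq : ∀ i, P.mulVec (fun j => xb j ^ (q+1)) i = tapp (q+1) n L xb i + b i)
    (Lbar : Fin n → (Fin (q+1) → Fin n) → ℝ)
    (hLbar : Lbar = fun i js =>
      (∑ σ : Equiv.Perm (Fin (q+1)), L i (js ∘ σ)) / (Nat.factorial (q+1)))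
    (Lmat : Matrix (Fin n) (Fin n) ℝ)
    (hLmat : Lmat = fun i j =>
      ∑ rest : Fin q → Fin n, Lbar i (Fin.cons j rest) * ∏ r, xb (rest r))
    (J : Matrix (Fin n) (Fin n) ℝ)
    (hJ : J = Matrix.diagonal (fun i => (xb i ^ q)⁻¹) * Pinv * Lmat) :
    (J.mulVec xb = fun i => xb i - (xb i ^ q)⁻¹ * Pinv.mulVec b i) ∧
    ((∀ i, 0 < Pinv.mulVec b i) → matSpecRad n J < 1) := by
  obtain ⟨hZ, y, hy, hPy⟩ := hP
  -- Lmat * xb = tapp L xb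
  have hLmv : Lmat.mulVec xb = tapp (q+1) n L xb := by
    funext i
    rw [Matrix.mulVec, dotProduct]
    calc ∑ j, Lmat i j * xb j
        = ∑ j : Fin n, (∑ rest : Fin q → Fin n,
            Lbar i (Fin.cons j rest) * ∏ r, xb (rest r)) * xb j := by rw [hLmat]
      _ = tapp (q+1) n Lbar xb i := aux_lmat_eq q n Lbar xb i
      _ = tapp (q+1) n L xb i := by rw [hLbar]; exact aux_tapp_symm q n L xb i
  -- Pinv (tapp L xb) = xb^{q+1} - Pinv b
  have hPinvL : Pinv.mulVec (tapp (q+1) n L xb)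
      = (fun j => xb j ^ (q+1)) - Pinv.mulVec b := by
    have h1 : tapp (q+1) n L xb = P.mulVec (fun j => xb j ^ (q+1)) - b := by
      funext i
      have := heq i
      simp [Pi.sub_apply]
      linarith
    rw [h1, Matrix.mulVec_sub, Matrix.mulVec_mulVec, hPinv.2, Matrix.one_mulVec]
  -- Part 1
  have part1 : J.mulVec xb = fun i => xb i - (xb i ^ q)⁻¹ * Pinv.mulVec b i := by
    funext i
    rw [hJ, ← Matrix.mulVec_mulVec, ← Matrix.mulVec_mulVec, hLmv, hPinvL,
      Matrix.mulVec_diagonal]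
    have hx0 : xb i ^ q ≠ 0 := pow_ne_zero q (ne_of_gt (hxb i))
    rw [Pi.sub_apply]
    field_simp
    ring
  refine ⟨part1, ?_⟩
  intro hpb
  -- Pinv is nonneg
  have hPinvnn : ∀ i j, 0 ≤ Pinv i j := by
    intro i j
    refine aux_mmatrix_sol_nonneg P hZ y hy hPy (fun k => Pinv k j) ?_ i
    intro i'
    have : P.mulVec (fun k => Pinv k j) i' = (P * Pinv) i' j := by
      rw [Matrix.mul_apply, Matrix.mulVec, dotProduct]
    rw [this, hPinv.1]
    by_cases h : i' = j <;> simp [Matrix.one_apply, h]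
  have hLbarnn : ∀ i js, 0 ≤ Lbar i js := by
    intro i js
    rw [hLbar]
    apply div_nonneg _ (by positivity)
    exact Finset.sum_nonneg fun σ _ => hL i _
  have hLmatnn : ∀ i j, 0 ≤ Lmat i j := by
    intro i j
    rw [hLmat]
    refine Finset.sum_nonneg fun rest _ => mul_nonneg (hLbarnn i _) ?_
    exact Finset.prod_nonneg fun r _ => (hxb _).le
  have hJnn : ∀ i j, 0 ≤ J i j := by
    intro i j
    rw [hJ, Matrix.mul_apply]
    refine Finset.sum_nonneg fun k _ => mul_nonneg ?_ (hLmatnn k j)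
    rw [Matrix.mul_apply]
    refine Finset.sum_nonneg fun k' _ => ?_
    rcases eq_or_ne i k' with rfl | hne
    · rw [Matrix.diagonal_apply_eq]
      exact mul_nonneg (inv_nonneg.mpr (pow_nonneg (hxb i).le q)) (hPinvnn i k)
    · rw [Matrix.diagonal_apply_ne _ hne, zero_mul]
  have hJxb_nn : ∀ i, 0 ≤ J.mulVec xb i := by
    intro i
    rw [Matrix.mulVec, dotProduct]
    exact Finset.sum_nonneg fun k _ => mul_nonneg (hJnn i k) (hxb k).le
  have hJxb_lt : ∀ i, J.mulVec xb i < xb i := by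
    intro i
    rw [part1]
    have : 0 < (xb i ^ q)⁻¹ * Pinv.mulVec b i :=
      mul_pos (inv_pos.mpr (pow_pos (hxb i) q)) (hpb i)
    linarith
  -- Spectral radius bound
  rcases Nat.eq_zero_or_pos n with hn | hn
  · subst hn
    have hempty : {r : ℝ | ∃ μ ∈ spectrum ℂ (J.map (Complex.ofReal ·)), r = ‖μ‖} = ∅ := by
      ext r
      simp only [Set.mem_setOf_eq, Set.mem_empty_iff_false, iff_false]
      rintro ⟨μ, hμ, _⟩
      rw [spectrum.mem_iff] at hμ
      exact hμ (isUnit_of_subsingleton _)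
    rw [matSpecRad, hempty, Real.sSup_empty]
    norm_num
  · haveI : Nonempty (Fin n) := ⟨⟨0, hn⟩⟩
    have hune : (univ : Finset (Fin n)).Nonempty := univ_nonempty
    set θ := Finset.sup' univ hune (fun i => J.mulVec xb i / xb i) with hθ
    have hθlt : θ < 1 := by
      rw [hθ, Finset.sup'_lt_iff]
      intro i _
      rw [div_lt_one (hxb i)]
      exact hJxb_lt i
    have hθnn : 0 ≤ θ := by
      obtain ⟨i⟩ := ‹Nonempty (Fin n)›
      refine le_trans ?_ (Finset.le_sup' _ (mem_univ i))
      exact div_nonneg (hJxb_nn i) (hxb i).le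
    have hbound : matSpecRad n J ≤ θ := by
      apply Real.sSup_le _ hθnn
      rintro r ⟨μ, hμ, rfl⟩
      obtain ⟨v, hv, hveq⟩ := aux_eigvec μ n _ hμ
      set w : Fin n → ℝ := fun k => ‖v k‖ with hw
      obtain ⟨i0, _, hi0⟩ := Finset.exists_max_image univ (fun k => w k / xb k) hune
      set c := w i0 / xb i0 with hc
      have hcpos : 0 < c := by
        obtain ⟨k, hk⟩ := Function.ne_iff.mp hv
        have hwk : 0 < w k := by
          rw [hw]; simpa using hk
        exact lt_of_lt_of_le (div_pos hwk (hxb k)) (hi0 k (mem_univ k))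
      have hwle : ∀ k, w k ≤ c * xb k := by
        intro k
        have := hi0 k (mem_univ k)
        rw [div_le_iff₀ (hxb k)] at this
        linarith
      have hwi0 : w i0 = c * xb i0 := by
        rw [hc, div_mul_cancel₀ _ (ne_of_gt (hxb i0))]
      have hkey : ‖μ‖ * w i0 ≤ c * (J.mulVec xb i0) := by
        have h1 : ‖μ‖ * w i0 = ‖(J.map (Complex.ofReal ·)).mulVec v i0‖ := by
          rw [hveq]
          simp [hw, Pi.smul_apply, map_mul]
        rw [h1]
        calc ‖(J.map (Complex.ofReal ·)).mulVec v i0‖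
            ≤ ∑ k, ‖(J.map (Complex.ofReal ·)) i0 k * v k‖ := by
              rw [Matrix.mulVec, dotProduct]
              exact norm_sum_le _ _
          _ = ∑ k, J i0 k * w k := by
              apply Finset.sum_congr rfl
              intro k _
              rw [norm_mul]
              simp [Matrix.map_apply, Complex.norm_real, Real.norm_eq_abs, abs_of_nonneg (hJnn i0 k), hw]
          _ ≤ ∑ k, J i0 k * (c * xb k) :=
              Finset.sum_le_sum fun k _ => mul_le_mul_of_nonneg_left (hwle k) (hJnn i0 k)
          _ = c * (J.mulVec xb i0) := by
              rw [Matrix.mulVec, dotProduct, Finset.mul_sum]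
              apply Finset.sum_congr rfl
              intro k _
              ring
      have hJxbθ : J.mulVec xb i0 ≤ θ * xb i0 := by
        have h1 : J.mulVec xb i0 / xb i0 ≤ θ :=
          Finset.le_sup' (fun i => J.mulVec xb i / xb i) (mem_univ i0)
        rw [div_le_iff₀ (hxb i0)] at h1
        linarith
      have hfinal : ‖μ‖ * (c * xb i0) ≤ θ * (c * xb i0) := by
        calc ‖μ‖ * (c * xb i0) = ‖μ‖ * w i0 := by rw [hwi0]
          _ ≤ c * (J.mulVec xb i0) := hkey
          _ ≤ c * (θ * xb i0) := mul_le_mul_of_nonneg_left hJxbθ hcpos.le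
          _ = θ * (c * xb i0) := by ring
      exact le_of_mul_le_mul_right (by linarith [hfinal]) (mul_pos hcpos (hxb i0))
    linarith

end
end

section
/- For the tensor A ∈ R^{[m,2]} with a_{11...1} = a_{22...2} = 1, a_{11...12} = −2, and all other entries zero, and b = (0,1)^T: the equation A x^{m-1} = b has exactly two nonnegative solutions, (0,1)^T and (2,1)^T, and the Jacobi iteration with x_0 = (3,1)^T produces x_k = (t_k, 1)^T where t_0 = 3 and t_{k+1} = (2 t_k^{m-2})^{1/(m-1)}; the sequence t_k decreases and converges to 2 linearly with rate (m−2)/(m−1). -/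
open Finset Filter

noncomputable section

/-- The tensor of the last example (0-indexed): `a_{11…1} = a_{22…2} = 1`,
`a_{11…12} = −2`, zero elsewhere. -/
def A16 (m : ℕ) : Fin 2 → (Fin (m-1) → Fin 2) → ℝ := fun i js =>
  if ∀ j, js j = i then 1
  else if i = 0 ∧ js = (fun j : Fin (m-1) => if (j : ℕ) = m - 2 then (1 : Fin 2) else 0) then -2
  else 0


/-- the special tuple -/
def esp (m : ℕ) : Fin (m-1) → Fin 2 := fun j => if (j : ℕ) = m - 2 then (1 : Fin 2) else 0

lemma esp_ne_const {m : ℕ} (hm : 3 ≤ m) (i : Fin 2) : esp m ≠ (fun _ => i) := by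
  intro h
  have h0 : esp m ⟨0, by omega⟩ = i := congrFun h _
  have h1 : esp m ⟨m-2, by omega⟩ = i := congrFun h _
  simp [esp] at h0 h1
  rw [if_neg (show ¬((0:ℕ) = m-2) by omega)] at h0
  exact absurd (h1.trans h0.symm) (by decide)

lemma prod_esp {m : ℕ} (hm : 3 ≤ m) (y : Fin 2 → ℝ) :
    (∏ j : Fin (m-1), y (esp m j)) = y 1 * y 0 ^ (m-2) := by
  have hlast : (⟨m-2, by omega⟩ : Fin (m-1)) ∈ (univ : Finset (Fin (m-1))) := mem_univ _
  rw [← Finset.mul_prod_erase univ _ hlast]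
  have h1 : y (esp m ⟨m-2, by omega⟩) = y 1 := by simp [esp]
  have h2 : ∀ j ∈ univ.erase (⟨m-2, by omega⟩ : Fin (m-1)), y (esp m j) = y 0 := by
    intro j hj
    have hne : (j : ℕ) ≠ m - 2 := fun h => (Finset.mem_erase.mp hj).1 (Fin.ext h)
    simp [esp, hne]
  rw [h1, Finset.prod_congr rfl h2, Finset.prod_const, Finset.card_erase_of_mem hlast]
  simp [Nat.sub_sub]

lemma tapp_A16_one {m : ℕ} (hm : 3 ≤ m) (y : Fin 2 → ℝ) :
    tapp (m-1) 2 (A16 m) y 1 = y 1 ^ (m-1) := by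
  unfold tapp
  rw [Finset.sum_eq_single (fun _ => (1 : Fin 2))]
  · simp [A16]
  · intro js _ hjs
    have h1 : ¬ ∀ j, js j = 1 := fun h => hjs (funext h)
    simp [A16, h1]
  · simp

lemma tapp_A16_zero {m : ℕ} (hm : 3 ≤ m) (y : Fin 2 → ℝ) :
    tapp (m-1) 2 (A16 m) y 0 = y 0 ^ (m-1) - 2 * (y 0 ^ (m-2) * y 1) := by
  unfold tapp
  have key : ∀ js : Fin (m-1) → Fin 2,
      A16 m 0 js * ∏ j, y (js j) =
      (if js = (fun _ => (0:Fin 2)) then y 0 ^ (m-1) else 0) +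
      (if js = esp m then -2 * (y 0 ^ (m-2) * y 1) else 0) := by
    intro js
    by_cases h0 : js = (fun _ => (0:Fin 2))
    · subst h0
      rw [if_pos rfl, if_neg (fun h => esp_ne_const hm 0 h.symm)]
      simp [A16]
    · by_cases he : js = esp m
      · subst he
        rw [if_neg h0, if_pos rfl]
        have hnc : ¬ ∀ j, esp m j = 0 := by
          intro h
          have := h ⟨m-2, by omega⟩
          simp [esp] at this
        rw [show A16 m 0 (esp m) = -2 by
          simp only [A16]
          rw [if_neg hnc, if_pos ⟨by trivial, rfl⟩], prod_esp hm y]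
        ring
      · rw [if_neg h0, if_neg he]
        have hnc : ¬ ∀ j, js j = 0 := fun h => h0 (funext h)
        rw [show A16 m 0 js = 0 by
          simp only [A16]
          rw [if_neg hnc, if_neg (fun h => he h.2)]]
        simp
  rw [Finset.sum_congr rfl (fun js _ => key js), Finset.sum_add_distrib]
  rw [Finset.sum_ite_eq' univ, Finset.sum_ite_eq' univ]
  simp; ring

lemma tapp_D_zero {m : ℕ} (hm : 3 ≤ m) (y : Fin 2 → ℝ) :
    tapp (m-1) 2 (fun i js => diagT (m-1) 2 (A16 m) i js - A16 m i js) y 0 =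
      2 * (y 0 ^ (m-2) * y 1) := by
  unfold tapp
  rw [Finset.sum_eq_single (esp m)]
  · have hnc : ¬ ∀ j, esp m j = 0 := by
      intro h
      have := h ⟨m-2, by omega⟩
      simp [esp] at this
    beta_reduce
    rw [show diagT (m-1) 2 (A16 m) 0 (esp m) - A16 m 0 (esp m) = 2 by
      simp only [diagT, A16]
      rw [if_neg hnc, if_neg hnc, if_pos ⟨by trivial, rfl⟩]; norm_num]
    rw [prod_esp hm y]; ring
  · intro js _ hjs
    by_cases hc : ∀ j, js j = 0
    · have : js = fun _ => (0 : Fin 2) := funext hc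
      subst this
      simp [diagT, A16]
    · beta_reduce
      rw [show diagT (m-1) 2 (A16 m) 0 js - A16 m 0 js = 0 by
        simp only [diagT, A16]
        rw [if_neg hc, if_neg hc, if_neg (fun h => hjs h.2)]; norm_num]
      simp
  · simp

lemma tapp_D_one {m : ℕ} (hm : 3 ≤ m) (y : Fin 2 → ℝ) :
    tapp (m-1) 2 (fun i js => diagT (m-1) 2 (A16 m) i js - A16 m i js) y 1 = 0 := by
  unfold tapp
  apply Finset.sum_eq_zero
  intro js _
  by_cases hc : ∀ j, js j = 1
  · beta_reduce
    rw [show diagT (m-1) 2 (A16 m) 1 js - A16 m 1 js = 0 by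
      simp only [diagT, A16]
      rw [if_pos hc, if_pos hc]; norm_num]
    simp
  · beta_reduce
    rw [show diagT (m-1) 2 (A16 m) 1 js - A16 m 1 js = 0 by
      simp only [diagT, A16]
      rw [if_neg hc, if_neg hc, if_neg (fun h => absurd h.1 (by decide))]; norm_num]
    simp

lemma A16_diag {m : ℕ} (hm : 3 ≤ m) (i : Fin 2) : A16 m i (fun _ => i) = 1 := by
  simp [A16]

lemma pow_inj (n : ℕ) (hn : n ≠ 0) (x y : ℝ) (hx : 0 ≤ x) (hy : 0 ≤ y)
    (h : x ^ n = y ^ n) : x = y :=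
  (pow_left_strictMonoOn₀ hn).injOn hx hy h

lemma t_formula (m : ℕ) (hm : 3 ≤ m) (t : ℕ → ℝ) (ht0 : t 0 = 3)
    (htiter : ∀ k, t (k+1) = (2 * t k ^ (m-2)) ^ ((1 : ℝ)/((m : ℝ) - 1))) (k : ℕ) :
    t k = 2 * Real.exp (Real.log (3/2) * (((m:ℝ)-2)/((m:ℝ)-1))^k) := by
  have hm3 : (3:ℝ) ≤ (m:ℝ) := by exact_mod_cast hm
  have hM1 : (0:ℝ) < (m:ℝ) - 1 := by linarith
  induction k with
  | zero =>
    rw [ht0, pow_zero, mul_one, Real.exp_log (by norm_num)]; norm_num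
  | succ k ih =>
    have htk : 0 < t k := by rw [ih]; positivity
    have hbase : 0 < 2 * t k ^ (m-2) := by positivity
    have hcast : ((m - 2 : ℕ) : ℝ) = (m:ℝ) - 2 := by
      have : (2:ℕ) ≤ m := by omega
      push_cast [this]; ring
    rw [htiter k, Real.rpow_def_of_pos hbase,
      Real.log_mul two_ne_zero (by positivity), Real.log_pow, ih,
      Real.log_mul two_ne_zero (Real.exp_ne_zero _), Real.log_exp]
    rw [show (2:ℝ) * Real.exp (Real.log (3/2) * (((m:ℝ)-2)/((m:ℝ)-1))^(k+1)) =
      Real.exp (Real.log 2 + Real.log (3/2) * (((m:ℝ)-2)/((m:ℝ)-1))^(k+1)) by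
        rw [Real.exp_add, Real.exp_log two_pos]]
    congr 1
    rw [hcast, pow_succ]
    field_simp
    ring

lemma limits16 (m : ℕ) (hm : 3 ≤ m) (t : ℕ → ℝ)
    (hf : ∀ k, t k = 2 * Real.exp (Real.log (3/2) * (((m:ℝ)-2)/((m:ℝ)-1))^k)) :
    (∀ k, t (k+1) < t k) ∧ Tendsto t atTop (nhds 2) ∧
    Tendsto (fun k => |t (k+1) - 2| / |t k - 2|) atTop
      (nhds (((m : ℝ) - 2)/((m : ℝ) - 1))) := by
  have hm3 : (3:ℝ) ≤ (m:ℝ) := by exact_mod_cast hm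
  set r : ℝ := ((m:ℝ)-2)/((m:ℝ)-1) with hr
  have hr0 : 0 < r := by apply div_pos <;> linarith
  have hr1 : r < 1 := by rw [div_lt_one (by linarith)]; linarith
  have hc : 0 < Real.log (3/2) := Real.log_pos (by norm_num)
  set c := Real.log (3/2) with hcdef
  set a : ℕ → ℝ := fun k => c * r^k with ha
  have hapos : ∀ k, 0 < a k := fun k => by positivity
  have hfa : ∀ k, t k = 2 * Real.exp (a k) := hf
  have hconv : Tendsto a atTop (nhds 0) := by
    have := tendsto_pow_atTop_nhds_zero_of_lt_one hr0.le hr1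
    simpa using this.const_mul c
  have hsucc : ∀ k, a (k+1) = r * a k := by
    intro k; simp only [ha, pow_succ]; ring
  refine ⟨?_, ?_, ?_⟩
  · intro k
    rw [hfa, hfa]
    have hlt : a (k+1) < a k := by
      rw [hsucc]
      nlinarith [hapos k]
    exact mul_lt_mul_of_pos_left (Real.exp_lt_exp.mpr hlt) two_pos
  · have : Tendsto t atTop (nhds (2 * Real.exp 0)) := by
      have h2 := (Real.continuous_exp.tendsto 0).comp hconv
      have := h2.const_mul (2:ℝ)
      refine this.congr fun k => (hfa k).symm
    simpa using this
  · have hg : Tendsto (fun y : ℝ => (Real.exp y - 1)/y) (nhdsWithin 0 {0}ᶜ) (nhds 1) := by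
      have hd := Real.hasDerivAt_exp 0
      rw [hasDerivAt_iff_tendsto_slope] at hd
      simp only [Real.exp_zero] at hd
      have heq : slope Real.exp 0 = fun y : ℝ => (Real.exp y - 1)/y := by
        funext y; simp [slope, Real.exp_zero]; ring
      rwa [heq] at hd
    have hta : Tendsto a atTop (nhdsWithin 0 {0}ᶜ) :=
      tendsto_nhdsWithin_of_tendsto_nhds_of_eventually_within _ hconv
        (Eventually.of_forall fun k => (hapos k).ne')
    have htra : Tendsto (fun k => r * a k) atTop (nhdsWithin 0 {0}ᶜ) := by
      refine tendsto_nhdsWithin_of_tendsto_nhds_of_eventually_within _ ?_ ?_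
      · simpa using hconv.const_mul r
      · exact Eventually.of_forall fun k => (by positivity : (0:ℝ) < r * a k).ne'
    have hmain : Tendsto
        (fun k => ((Real.exp (r * a k) - 1)/(r * a k)) / ((Real.exp (a k) - 1)/(a k)) * r)
        atTop (nhds ((1:ℝ)/1 * r)) :=
      ((hg.comp htra).div (hg.comp hta) one_ne_zero).mul_const r
    rw [show (1:ℝ)/1 * r = r by norm_num] at hmain
    refine hmain.congr fun k => ?_
    have h1 : t (k+1) - 2 = 2 * (Real.exp (r * a k) - 1) := by
      rw [hfa (k+1), hsucc]; ring
    have h2 : t k - 2 = 2 * (Real.exp (a k) - 1) := by rw [hfa k]; ring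
    have he1 : 0 < Real.exp (r * a k) - 1 := by
      have : (1:ℝ) < Real.exp (r * a k) := by
        rw [show (1:ℝ) = Real.exp 0 by simp]
        exact Real.exp_lt_exp.mpr (by positivity)
      linarith
    have he2 : 0 < Real.exp (a k) - 1 := by
      have : (1:ℝ) < Real.exp (a k) := by
        rw [show (1:ℝ) = Real.exp 0 by simp]
        exact Real.exp_lt_exp.mpr (hapos k)
      linarith
    rw [h1, h2, abs_of_pos (by linarith), abs_of_pos (by linarith)]
    have hak := (hapos k).ne'
    field_simp


/-- for `A16` and `b = (0,1)`, the nonnegative solutions are exactly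
`(0,1)` and `(2,1)`; the Jacobi iterates from `x₀ = (3,1)` are `x_k = (t_k, 1)` with
`t₀ = 3`, `t_{k+1} = (2 t_k^{m-2})^{1/(m-1)}`, and `t_k` decreases to `2` linearly
with rate `(m−2)/(m−1)`. -/
theorem stmt16 (m : ℕ) (hm : 3 ≤ m)
    (x : ℕ → Fin 2 → ℝ) (hx0 : x 0 = ![3, 1]) (hxpos : ∀ k, 0 ≤ x (k+1))
    (hiter : ∀ k i, A16 m i (fun _ => i) * (x (k+1) i) ^ (m-1) =
      tapp (m-1) 2 (fun i js => diagT (m-1) 2 (A16 m) i js - A16 m i js) (x k) i +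
        (![0, 1] : Fin 2 → ℝ) i)
    (t : ℕ → ℝ) (ht0 : t 0 = 3)
    (htiter : ∀ k, t (k+1) = (2 * t k ^ (m-2)) ^ ((1 : ℝ)/((m : ℝ) - 1))) :
    (∀ y : Fin 2 → ℝ, 0 ≤ y →
      (tapp (m-1) 2 (A16 m) y = ![0, 1] ↔ y = ![0, 1] ∨ y = ![2, 1])) ∧
    (∀ k, x k = ![t k, 1]) ∧
    (∀ k, t (k+1) < t k) ∧
    Filter.Tendsto t Filter.atTop (nhds 2) ∧
    Filter.Tendsto (fun k => |t (k+1) - 2| / |t k - 2|) Filter.atTop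
      (nhds (((m : ℝ) - 2)/((m : ℝ) - 1))) := by
  have hm3 : (3:ℝ) ≤ (m:ℝ) := by exact_mod_cast hm
  have hm1 : m - 1 ≠ 0 := by omega
  have hm2 : m - 2 ≠ 0 := by omega
  have hf : ∀ k, t k = 2 * Real.exp (Real.log (3/2) * (((m:ℝ)-2)/((m:ℝ)-1))^k) :=
    t_formula m hm t ht0 htiter
  obtain ⟨hdec, hlim, hrate⟩ := limits16 m hm t hf
  have htpos : ∀ k, 0 < t k := fun k => by rw [hf]; positivity
  have part1 : ∀ y : Fin 2 → ℝ, 0 ≤ y →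
      (tapp (m-1) 2 (A16 m) y = ![0, 1] ↔ y = ![0, 1] ∨ y = ![2, 1]) := by
    intro y hy
    have hy0 : 0 ≤ y 0 := by simpa using hy 0
    have hy1 : 0 ≤ y 1 := by simpa using hy 1
    have hpow : y 0 ^ (m-1) = y 0 ^ (m-2) * y 0 := by
      rw [← pow_succ]; congr 1; omega
    constructor
    · intro h
      have h1 : y 1 ^ (m-1) = 1 := by
        have := congrFun h 1
        rw [tapp_A16_one hm] at this
        simpa using this
      have hy1e : y 1 = 1 :=
        pow_inj (m-1) hm1 (y 1) 1 hy1 zero_le_one (by rw [h1, one_pow])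
      have h0 := congrFun h 0
      rw [tapp_A16_zero hm, hy1e] at h0
      simp only [Matrix.cons_val_zero] at h0
      rw [hpow] at h0
      have hfac : y 0 ^ (m-2) * (y 0 - 2) = 0 := by linear_combination h0
      rcases mul_eq_zero.mp hfac with hz | hz
      · left
        have : y 0 = 0 := by
          exact pow_eq_zero_iff hm2 |>.mp hz
        funext i; fin_cases i <;> simp [this, hy1e]
      · right
        have : y 0 = 2 := by linarith
        funext i; fin_cases i <;> simp [this, hy1e]
    · rintro (rfl | rfl) <;> funext i <;> fin_cases i
      · rw [show (⟨0, by norm_num⟩ : Fin 2) = 0 from rfl, tapp_A16_zero hm]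
        simp [zero_pow hm1, zero_pow hm2]
      · rw [show (⟨1, by norm_num⟩ : Fin 2) = 1 from rfl, tapp_A16_one hm]
        simp
      · rw [show (⟨0, by norm_num⟩ : Fin 2) = 0 from rfl, tapp_A16_zero hm]
        simp only [Matrix.cons_val_zero, Matrix.cons_val_one, Matrix.head_cons]
        rw [show (2:ℝ)^(m-1) = 2^(m-2)*2 by rw [← pow_succ]; congr 1; omega]
        ring
      · rw [show (⟨1, by norm_num⟩ : Fin 2) = 1 from rfl, tapp_A16_one hm]
        simp
  have part2 : ∀ k, x k = ![t k, 1] := by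
    intro k
    induction k with
    | zero => rw [hx0, ht0]
    | succ k ih =>
      have h1 := hiter k 1
      have h0 := hiter k 0
      rw [A16_diag hm, one_mul, tapp_D_one hm] at h1
      rw [A16_diag hm, one_mul, tapp_D_zero hm, ih] at h0
      have hx1 : x (k+1) 1 = 1 := by
        apply pow_inj (m-1) hm1 _ _ (by simpa using hxpos k 1) zero_le_one
        rw [one_pow, h1]; simp
      have ht1 : t (k+1) ^ (m-1) = 2 * (t k ^ (m-2)) := by
        rw [htiter k]
        rw [← Real.rpow_natCast ((2 * t k ^ (m-2)) ^ ((1:ℝ)/((m:ℝ)-1))) (m-1),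
          ← Real.rpow_mul (by have := htpos k; positivity)]
        rw [show (1:ℝ)/((m:ℝ)-1) * ((m-1 : ℕ):ℝ) = 1 by
          have hc1 : ((m-1:ℕ):ℝ) = (m:ℝ) - 1 := by
            have : (1:ℕ) ≤ m := by omega
            push_cast [this]; ring
          rw [hc1, div_mul_cancel₀]
          linarith]
        rw [Real.rpow_one]
      have hxx : x (k+1) 0 = t (k+1) := by
        apply pow_inj (m-1) hm1 _ _ (by simpa using hxpos k 0) (htpos (k+1)).le
        rw [ht1, h0]
        simp
      funext i; fin_cases i
      · simpa using hxx
      · simpa using hx1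
  exact ⟨part1, part2, hdec, hlim, hrate⟩

end
end

section
/- Let A be a nonsingular M-tensor and b a positive vector. Then the unique positive solution of A x^{m-1} = b is the only nonnegative solution; equivalently, the minimal nonnegative solution is positive and equal to the maximal nonnegative solution. -/
open Finset Filter

noncomputable section

namespace Aux

open Topology

variable {p n : ℕ}

lemma tapp_nonneg {B : Fin n → (Fin p → Fin n) → ℝ} (hB : ∀ i js, 0 ≤ B i js)
    {x : Fin n → ℝ} (hx : ∀ i, 0 ≤ x i) (i : Fin n) : 0 ≤ tapp p n B x i := by
  refine Finset.sum_nonneg fun js _ => mul_nonneg (hB i js) (Finset.prod_nonneg fun j _ => hx _)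

lemma tapp_mono {B : Fin n → (Fin p → Fin n) → ℝ} (hB : ∀ i js, 0 ≤ B i js)
    {x y : Fin n → ℝ} (hx : ∀ i, 0 ≤ x i) (hxy : ∀ i, x i ≤ y i) (i : Fin n) :
    tapp p n B x i ≤ tapp p n B y i := by
  refine Finset.sum_le_sum fun js _ => ?_
  refine mul_le_mul_of_nonneg_left ?_ (hB i js)
  exact Finset.prod_le_prod (fun j _ => hx _) (fun j _ => hxy _)

lemma tapp_smul (B : Fin n → (Fin p → Fin n) → ℝ) (x : Fin n → ℝ) (t : ℝ) (i : Fin n) :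
    tapp p n B (fun j => t * x j) i = t ^ p * tapp p n B x i := by
  unfold tapp
  rw [Finset.mul_sum]
  refine Finset.sum_congr rfl fun js _ => ?_
  rw [Finset.prod_mul_distrib, Finset.prod_const]
  simp [Finset.card_univ]
  ring

lemma tapp_cont (B : Fin n → (Fin p → Fin n) → ℝ) (i : Fin n) :
    Continuous fun x : Fin n → ℝ => tapp p n B x i := by
  unfold tapp
  exact continuous_finset_sum _ fun js _ =>
    continuous_const.mul (continuous_finset_prod _ fun j _ => continuous_apply _)

lemma sum_ident (i : Fin n) (x : Fin n → ℝ) :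
    ∑ js : Fin p → Fin n, identT p n i js * ∏ j, x (js j) = x i ^ p := by
  have h : ∀ js : Fin p → Fin n, identT p n i js * ∏ j, x (js j)
      = if js = (fun _ => i) then ∏ j, x (js j) else 0 := by
    intro js
    unfold identT
    by_cases h : js = fun _ => i
    · simp [h]
    · have : ¬ (∀ j, js j = i) := by
        intro hall; exact h (funext hall)
      simp [this, h]
  rw [Finset.sum_congr rfl fun js _ => h js, Finset.sum_ite_eq' Finset.univ (fun _ => i)]
  simp [Finset.prod_const, Finset.card_univ]

lemma tapp_decomp {A B : Fin n → (Fin p → Fin n) → ℝ} {s : ℝ}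
    (hA : ∀ i js, A i js = s * identT p n i js - B i js) (x : Fin n → ℝ) (i : Fin n) :
    tapp p n A x i = s * x i ^ p - tapp p n B x i := by
  unfold tapp
  rw [Finset.sum_congr rfl fun js _ => by rw [hA i js, sub_mul, mul_assoc],
    Finset.sum_sub_distrib, ← Finset.mul_sum, sum_ident]

lemma eig_bound (D : Fin n → (Fin p → Fin n) → ℝ) {lam : ℝ} {x : Fin n → ℝ} (hx : x ≠ 0)
    (he : ∀ i, tapp p n D x i = lam * x i ^ p) :
    |lam| ≤ ∑ i, ∑ js : Fin p → Fin n, |D i js| := by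
  obtain ⟨i1, hi1⟩ : ∃ i, x i ≠ 0 := by
    by_contra h
    push_neg at h
    exact hx (funext h)
  obtain ⟨i0, -, hi0⟩ := Finset.exists_max_image Finset.univ (fun i => |x i|) ⟨i1, Finset.mem_univ i1⟩
  have hx0 : 0 < |x i0| := lt_of_lt_of_le (abs_pos.mpr hi1) (hi0 i1 (Finset.mem_univ i1))
  have key : |lam| * |x i0| ^ p ≤ (∑ js : Fin p → Fin n, |D i0 js|) * |x i0| ^ p := by
    have h1 : |lam| * |x i0| ^ p = |tapp p n D x i0| := by
      rw [he i0, abs_mul, abs_pow]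
    rw [h1]
    calc |tapp p n D x i0| ≤ ∑ js : Fin p → Fin n, |D i0 js * ∏ j, x (js j)| :=
          Finset.abs_sum_le_sum_abs _ _
      _ ≤ ∑ js : Fin p → Fin n, |D i0 js| * |x i0| ^ p := by
          refine Finset.sum_le_sum fun js _ => ?_
          rw [abs_mul]
          refine mul_le_mul_of_nonneg_left ?_ (abs_nonneg _)
          rw [Finset.abs_prod]
          calc ∏ j, |x (js j)| ≤ ∏ j : Fin p, |x i0| :=
                Finset.prod_le_prod (fun j _ => abs_nonneg _) (fun j _ => hi0 _ (Finset.mem_univ _))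
            _ = |x i0| ^ p := by rw [Finset.prod_const, Finset.card_univ, Fintype.card_fin]
      _ = (∑ js : Fin p → Fin n, |D i0 js|) * |x i0| ^ p := by rw [Finset.sum_mul]
  have h2 : |lam| ≤ ∑ js : Fin p → Fin n, |D i0 js| :=
    le_of_mul_le_mul_right key (pow_pos hx0 p)
  refine h2.trans (Finset.single_le_sum (f := fun i => ∑ js : Fin p → Fin n, |D i js|)
    (fun i _ => Finset.sum_nonneg fun js _ => abs_nonneg _) (Finset.mem_univ i0))

lemma simplex_le_one {x : Fin n → ℝ} (hx : x ∈ stdSimplex ℝ (Fin n)) (i : Fin n) : x i ≤ 1 := by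
  rcases hx with ⟨h0, h1⟩
  calc x i ≤ ∑ j, x j := Finset.single_le_sum (fun j _ => h0 j) (Finset.mem_univ i)
    _ = 1 := h1

lemma simplex_ne_zero {x : Fin n → ℝ} (hx : x ∈ stdSimplex ℝ (Fin n)) : x ≠ 0 := by
  intro h
  rcases hx with ⟨-, h1⟩
  rw [h] at h1
  simp at h1

lemma normalize_subeigen (C : Fin n → (Fin p → Fin n) → ℝ) {s : ℝ} {y : Fin n → ℝ}
    (hy : ∀ i, 0 ≤ y i) (hy0 : y ≠ 0)
    (hineq : ∀ i, s * y i ^ p ≤ tapp p n C y i) :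
    ∃ x ∈ stdSimplex ℝ (Fin n), ∀ i, s * x i ^ p ≤ tapp p n C x i := by
  obtain ⟨i1, hi1⟩ : ∃ i, y i ≠ 0 := by
    by_contra h; push_neg at h; exact hy0 (funext h)
  have hσ : 0 < ∑ i, y i :=
    Finset.sum_pos' (fun i _ => hy i) ⟨i1, Finset.mem_univ i1, lt_of_le_of_ne (hy i1) (Ne.symm hi1)⟩
  set σ := ∑ i, y i with hσdef
  refine ⟨fun i => σ⁻¹ * y i, ⟨fun i => mul_nonneg (inv_nonneg.mpr hσ.le) (hy i), by
    rw [← Finset.mul_sum, ← hσdef, inv_mul_cancel₀ hσ.ne']⟩, fun i => ?_⟩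
  have := tapp_smul C y σ⁻¹ i
  rw [this, mul_pow]
  calc s * (σ⁻¹ ^ p * y i ^ p) = σ⁻¹ ^ p * (s * y i ^ p) := by ring
    _ ≤ σ⁻¹ ^ p * tapp p n C y i :=
        mul_le_mul_of_nonneg_left (hineq i) (pow_nonneg (inv_nonneg.mpr hσ.le) p)



lemma pf_positive (hp : p ≠ 0) (hn : 0 < n) (C : Fin n → (Fin p → Fin n) → ℝ)
    (hC : ∀ i js, 0 < C i js) {s : ℝ} (hs : 0 < s) {y : Fin n → ℝ}
    (hy : ∀ i, 0 ≤ y i) (hy0 : y ≠ 0) (hineq : ∀ i, s * y i ^ p ≤ tapp p n C y i) :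
    ∃ lam : ℝ, ∃ x : Fin n → ℝ, x ∈ stdSimplex ℝ (Fin n) ∧
      (∀ i, tapp p n C x i = lam * x i ^ p) ∧ s ≤ lam := by
  haveI : Nonempty (Fin n) := ⟨⟨0, hn⟩⟩
  set Ctot : ℝ := ∑ i, ∑ js : Fin p → Fin n, C i js with hCtotdef
  set M : ℝ := Ctot * (n : ℝ) ^ p with hMdef
  -- the uniform bound
  have hbound : ∀ (t : ℝ) (x : Fin n → ℝ), 0 ≤ t → x ∈ stdSimplex ℝ (Fin n) →
      (∀ i, t * x i ^ p ≤ tapp p n C x i) → t ≤ M := by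
    intro t x ht hx hix
    obtain ⟨i, hi⟩ : ∃ i, (n : ℝ)⁻¹ ≤ x i := by
      by_contra h
      push_neg at h
      have h1 : (1 : ℝ) < 1 := by
        calc (1:ℝ) = ∑ j, x j := hx.2.symm
          _ < ∑ _j : Fin n, (n : ℝ)⁻¹ := Finset.sum_lt_sum_of_nonempty Finset.univ_nonempty
              (fun j _ => h j)
          _ = 1 := by
            rw [Finset.sum_const, Finset.card_univ, Fintype.card_fin, nsmul_eq_mul,
              mul_inv_cancel₀ (by positivity : (n:ℝ) ≠ 0)]
      exact absurd h1 (lt_irrefl 1)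
    have hx1 : ∀ j, x j ≤ 1 := by
      intro j
      calc x j ≤ ∑ k, x k := Finset.single_le_sum (fun k _ => hx.1 k) (Finset.mem_univ j)
        _ = 1 := hx.2
    have h2 : tapp p n C x i ≤ Ctot := by
      calc tapp p n C x i ≤ ∑ js : Fin p → Fin n, C i js * 1 := by
            refine Finset.sum_le_sum fun js _ => ?_
            exact mul_le_mul_of_nonneg_left
              (Finset.prod_le_one (fun j _ => hx.1 _) (fun j _ => hx1 _)) (hC i js).le
        _ = ∑ js : Fin p → Fin n, C i js := by simp
        _ ≤ Ctot := Finset.single_le_sum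
            (f := fun i' => ∑ js : Fin p → Fin n, C i' js)
            (fun i' _ => Finset.sum_nonneg fun js _ => (hC i' js).le) (Finset.mem_univ i)
    have h3 : t * ((n : ℝ) ^ p)⁻¹ ≤ Ctot := by
      calc t * ((n : ℝ) ^ p)⁻¹ = t * ((n:ℝ)⁻¹) ^ p := by rw [inv_pow]
        _ ≤ t * x i ^ p := by
            refine mul_le_mul_of_nonneg_left (pow_le_pow_left₀ (by positivity) hi p) ht
        _ ≤ tapp p n C x i := hix i
        _ ≤ Ctot := h2
    have hnp : (0:ℝ) < ((n : ℝ) ^ p)⁻¹ := by positivity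
    calc t = t * ((n : ℝ) ^ p)⁻¹ * (n:ℝ)^p := by
          field_simp
      _ ≤ Ctot * (n:ℝ)^p := by
          refine mul_le_mul_of_nonneg_right h3 (by positivity)
  -- the compact feasible set
  set W : Set (ℝ × (Fin n → ℝ)) := (Set.Icc (0:ℝ) M ×ˢ stdSimplex ℝ (Fin n)) ∩
    {z | ∀ i, z.1 * z.2 i ^ p ≤ tapp p n C z.2 i} with hWdef
  have hWclosed : IsClosed {z : ℝ × (Fin n → ℝ) | ∀ i, z.1 * z.2 i ^ p ≤ tapp p n C z.2 i} := by
    have : {z : ℝ × (Fin n → ℝ) | ∀ i, z.1 * z.2 i ^ p ≤ tapp p n C z.2 i}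
        = ⋂ i, {z : ℝ × (Fin n → ℝ) | z.1 * z.2 i ^ p ≤ tapp p n C z.2 i} := by
      ext z; simp [Set.mem_iInter]
    rw [this]
    refine isClosed_iInter fun i => isClosed_le ?_ ?_
    · exact continuous_fst.mul (((continuous_apply i).comp continuous_snd).pow p)
    · exact (tapp_cont C i).comp continuous_snd
  have hWcomp : IsCompact W :=
    ((isCompact_Icc.prod (isCompact_stdSimplex ℝ (Fin n)))).inter_right hWclosed
  set S : Set ℝ := Prod.fst '' W with hSdef
  have hScomp : IsCompact S := hWcomp.image continuous_fst
  have hmem : ∀ (t : ℝ) (x : Fin n → ℝ), 0 ≤ t → x ∈ stdSimplex ℝ (Fin n) →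
      (∀ i, t * x i ^ p ≤ tapp p n C x i) → t ∈ S := by
    intro t x ht hx hix
    exact ⟨(t, x), ⟨⟨⟨ht, hbound t x ht hx hix⟩, hx⟩, hix⟩, rfl⟩
  obtain ⟨y', hy'Δ, hy'ineq⟩ := normalize_subeigen C hy hy0 hineq
  have hsS : s ∈ S := hmem s y' hs.le hy'Δ hy'ineq
  set lam : ℝ := sSup S with hlamdef
  have hlamS : lam ∈ S := hScomp.sSup_mem ⟨s, hsS⟩
  have hslam : s ≤ lam := le_csSup hScomp.bddAbove hsS
  have hlampos : 0 < lam := lt_of_lt_of_le hs hslam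
  obtain ⟨⟨t0, x⟩, ⟨⟨ht0M, hxΔ⟩, hxineq⟩, ht0⟩ := hlamS
  simp only at ht0
  subst ht0
  refine ⟨lam, x, hxΔ, fun j => ?_, hslam⟩
  by_contra hne
  have hj : lam * x j ^ p < tapp p n C x j := (hxineq j).lt_of_ne (Ne.symm hne)
  -- positivity of tapp C x
  obtain ⟨i1, hi1⟩ : ∃ i, 0 < x i := by
    by_contra h
    push_neg at h
    have : (1:ℝ) ≤ 0 := by
      rw [← hxΔ.2]
      exact Finset.sum_nonpos fun i _ => h i
    linarith
  have hpos : ∀ i, 0 < tapp p n C x i := by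
    intro i
    have h1 : C i (fun _ => i1) * ∏ _j : Fin p, x i1 ≤ tapp p n C x i := by
      refine Finset.single_le_sum (f := fun js => C i js * ∏ j, x (js j))
        (fun js _ => mul_nonneg (hC i js).le (Finset.prod_nonneg fun j _ => hxΔ.1 _))
        (Finset.mem_univ (fun _ => i1))
    refine lt_of_lt_of_le ?_ h1
    rw [Finset.prod_const, Finset.card_univ, Fintype.card_fin]
    exact mul_pos (hC i _) (pow_pos hi1 p)
  set u : Fin n → ℝ := fun i => (tapp p n C x i) ^ ((p:ℝ)⁻¹) with hudef
  have hu_pow : ∀ i, u i ^ p = tapp p n C x i :=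
    fun i => Real.rpow_inv_natCast_pow (hpos i).le hp
  have hu_pos : ∀ i, 0 < u i := fun i => Real.rpow_pos_of_pos (hpos i) _
  have hu_ge : ∀ i, lam ^ ((p:ℝ)⁻¹) * x i ≤ u i := by
    intro i
    have h1 : (lam * x i ^ p) ^ ((p:ℝ)⁻¹) ≤ u i :=
      Real.rpow_le_rpow (mul_nonneg hlampos.le (pow_nonneg (hxΔ.1 i) p)) (hxineq i)
        (by positivity)
    calc lam ^ ((p:ℝ)⁻¹) * x i = (lam * x i ^ p) ^ ((p:ℝ)⁻¹) := by
          rw [Real.mul_rpow hlampos.le (pow_nonneg (hxΔ.1 i) p),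
            Real.pow_rpow_inv_natCast (hxΔ.1 i) hp]
      _ ≤ u i := h1
  have hlam_rpow : (lam ^ ((p:ℝ)⁻¹)) ^ p = lam := Real.rpow_inv_natCast_pow hlampos.le hp
  -- the strict improvement
  have key : ∀ i, lam * u i ^ p < tapp p n C u i := by
    intro i
    set cj : Fin p → Fin n := fun _ => j with hcjdef
    have hsplit : tapp p n C u i = C i cj * ∏ j', u (cj j') +
        ∑ js ∈ Finset.univ.erase cj, C i js * ∏ j', u (js j') :=
      (Finset.add_sum_erase Finset.univ (fun js => C i js * ∏ j', u (js j'))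
        (Finset.mem_univ cj)).symm
    have hsplitx : tapp p n C x i = C i cj * ∏ j', x (cj j') +
        ∑ js ∈ Finset.univ.erase cj, C i js * ∏ j', x (js j') :=
      (Finset.add_sum_erase Finset.univ (fun js => C i js * ∏ j', x (js j'))
        (Finset.mem_univ cj)).symm
    have herase : ∀ js ∈ Finset.univ.erase cj,
        lam * (C i js * ∏ j', x (js j')) ≤ C i js * ∏ j', u (js j') := by
      intro js _
      have h1 : ∏ j', (lam ^ ((p:ℝ)⁻¹) * x (js j')) ≤ ∏ j', u (js j') :=
        Finset.prod_le_prod (fun j' _ => mul_nonneg (Real.rpow_nonneg hlampos.le _) (hxΔ.1 _)) (fun j' _ => hu_ge _)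
      calc lam * (C i js * ∏ j', x (js j')) = C i js * ∏ j', (lam ^ ((p:ℝ)⁻¹) * x (js j')) := by
            rw [Finset.prod_mul_distrib, Finset.prod_const, Finset.card_univ, Fintype.card_fin,
              hlam_rpow]
            ring
        _ ≤ C i js * ∏ j', u (js j') := mul_le_mul_of_nonneg_left h1 (hC i js).le
    have hsum : lam * ∑ js ∈ Finset.univ.erase cj, C i js * ∏ j', x (js j')
        ≤ ∑ js ∈ Finset.univ.erase cj, C i js * ∏ j', u (js j') := by
      rw [Finset.mul_sum]
      exact Finset.sum_le_sum herase
    have hprodc : ∀ z : Fin n → ℝ, ∏ j', z (cj j') = z j ^ p := by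
      intro z
      rw [hcjdef]
      simp [Finset.prod_const, Finset.card_univ]
    have hujlam : lam * x j ^ p < u j ^ p := by rw [hu_pow]; exact hj
    calc lam * u i ^ p = lam * tapp p n C x i := by rw [hu_pow]
      _ = lam * (C i cj * x j ^ p) + lam * ∑ js ∈ Finset.univ.erase cj,
            C i js * ∏ j', x (js j') := by rw [hsplitx, hprodc x]; ring
      _ < C i cj * u j ^ p + lam * ∑ js ∈ Finset.univ.erase cj,
            C i js * ∏ j', x (js j') := by
          have : lam * (C i cj * x j ^ p) < C i cj * u j ^ p := by
            have := mul_lt_mul_of_pos_left hujlam (hC i cj)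
            calc lam * (C i cj * x j ^ p) = C i cj * (lam * x j ^ p) := by ring
              _ < C i cj * u j ^ p := this
          linarith
      _ ≤ C i cj * u j ^ p + ∑ js ∈ Finset.univ.erase cj, C i js * ∏ j', u (js j') := by
          linarith
      _ = tapp p n C u i := by rw [hsplit, hprodc u]
  -- build a better element of S
  set t' : ℝ := Finset.univ.inf' Finset.univ_nonempty
    (fun i => tapp p n C u i / u i ^ p) with ht'def
  have ht'gt : lam < t' := by
    rw [ht'def, Finset.lt_inf'_iff]
    intro i _
    rw [lt_div_iff₀ (pow_pos (hu_pos i) p)]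
    exact key i
  have ht'ineq : ∀ i, t' * u i ^ p ≤ tapp p n C u i := by
    intro i
    have h1 : t' ≤ tapp p n C u i / u i ^ p :=
      Finset.inf'_le _ (Finset.mem_univ i)
    exact (le_div_iff₀ (pow_pos (hu_pos i) p)).mp h1
  obtain ⟨v, hvΔ, hvineq⟩ := normalize_subeigen C (s := t') (fun i => (hu_pos i).le)
    (fun h => (hu_pos ⟨0, hn⟩).ne' (congrFun h _)) ht'ineq
  have ht'S : t' ∈ S := hmem t' v (le_of_lt (lt_trans hlampos ht'gt)) hvΔ hvineq
  have : t' ≤ lam := le_csSup hScomp.bddAbove ht'S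
  linarith


lemma specRad_ge (B : Fin n → (Fin p → Fin n) → ℝ) {lam : ℝ} {x : Fin n → ℝ} (hx : x ≠ 0)
    (he : ∀ i, tapp p n B x i = lam * x i ^ p) :
    |lam| ≤ tensorSpecRad p n B := by
  refine le_csSup ⟨∑ i, ∑ js : Fin p → Fin n, |B i js|, ?_⟩ ⟨lam, x, hx, he, rfl⟩
  rintro r ⟨lam', x', hx', he', rfl⟩
  exact eig_bound B hx' he'

lemma tapp_addconst (B : Fin n → (Fin p → Fin n) → ℝ) (c : ℝ) (z : Fin n → ℝ) (i : Fin n) :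
    tapp p n (fun i' js => B i' js + c) z i
      = tapp p n B z i + c * ∑ js : Fin p → Fin n, ∏ j, z (js j) := by
  unfold tapp
  rw [Finset.mul_sum, ← Finset.sum_add_distrib]
  refine Finset.sum_congr rfl fun js _ => by ring

lemma subeigen_specRad (hp : p ≠ 0) (hn : 0 < n) (B : Fin n → (Fin p → Fin n) → ℝ)
    (hB : ∀ i js, 0 ≤ B i js) {s : ℝ} (hs : 0 < s) {y : Fin n → ℝ}
    (hy : ∀ i, 0 ≤ y i) (hy0 : y ≠ 0) (hineq : ∀ i, s * y i ^ p ≤ tapp p n B y i) :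
    s ≤ tensorSpecRad p n B := by
  set ep : ℕ → ℝ := fun k => 1 / ((k : ℝ) + 1) with hepdef
  have hep_pos : ∀ k, 0 < ep k := fun k => by positivity
  have hep_le : ∀ k, ep k ≤ 1 := by
    intro k
    rw [hepdef]
    rw [div_le_one (by positivity)]
    exact le_add_of_nonneg_left (Nat.cast_nonneg k)
  set C : ℕ → Fin n → (Fin p → Fin n) → ℝ := fun k i js => B i js + ep k with hCdef
  have hCpos : ∀ k i js, 0 < C k i js := fun k i js =>
    add_pos_of_nonneg_of_pos (hB i js) (hep_pos k)
  have hPnonneg : ∀ z : Fin n → ℝ, (∀ i, 0 ≤ z i) →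
      0 ≤ ∑ js : Fin p → Fin n, ∏ j, z (js j) :=
    fun z hz => Finset.sum_nonneg fun js _ => Finset.prod_nonneg fun j _ => hz _
  have hCineq : ∀ k i, s * y i ^ p ≤ tapp p n (C k) y i := by
    intro k i
    rw [hCdef]
    rw [tapp_addconst]
    have := mul_nonneg (hep_pos k).le (hPnonneg y hy)
    linarith [hineq i]
  have hEX : ∀ k, ∃ lam : ℝ, ∃ x : Fin n → ℝ, x ∈ stdSimplex ℝ (Fin n) ∧
      (∀ i, tapp p n (C k) x i = lam * x i ^ p) ∧ s ≤ lam := fun k =>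
    pf_positive hp hn (C k) (hCpos k) hs hy hy0 (hCineq k)
  choose lam xx hxΔ heig hslam using hEX
  set Mtot : ℝ := ∑ i, ∑ js : Fin p → Fin n, (B i js + 1) with hMtotdef
  have hlamM : ∀ k, lam k ≤ Mtot := by
    intro k
    have h1 := eig_bound (C k) (simplex_ne_zero (hxΔ k)) (heig k)
    refine le_trans (le_abs_self _) (h1.trans ?_)
    refine Finset.sum_le_sum fun i _ => Finset.sum_le_sum fun js _ => ?_
    rw [hCdef, abs_of_nonneg (add_pos_of_nonneg_of_pos (hB i js) (hep_pos k)).le]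
    exact by linarith [hep_le k]
  -- compactness
  set P : Set (ℝ × (Fin n → ℝ)) := Set.Icc s Mtot ×ˢ stdSimplex ℝ (Fin n) with hPdef
  have hPcomp : IsCompact P := isCompact_Icc.prod (isCompact_stdSimplex ℝ (Fin n))
  have hmemP : ∀ k, (lam k, xx k) ∈ P := fun k => ⟨⟨hslam k, hlamM k⟩, hxΔ k⟩
  obtain ⟨l, hlP, φ, hφ, htend⟩ := hPcomp.tendsto_subseq hmemP
  have htlam : Tendsto (fun j => lam (φ j)) atTop (𝓝 l.1) :=
    ((continuous_fst.tendsto l).comp htend)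
  have htx : Tendsto (fun j => xx (φ j)) atTop (𝓝 l.2) :=
    ((continuous_snd.tendsto l).comp htend)
  have hφtop : Tendsto φ atTop atTop := hφ.tendsto_atTop
  set K : ℝ := (Fintype.card (Fin p → Fin n) : ℝ) with hKdef
  have hPbound : ∀ z : Fin n → ℝ, z ∈ stdSimplex ℝ (Fin n) →
      (∑ js : Fin p → Fin n, ∏ j, z (js j)) ≤ K := by
    intro z hz
    have hz1 : ∀ j, z j ≤ 1 := by
      intro j
      calc z j ≤ ∑ i, z i := Finset.single_le_sum (fun i _ => hz.1 i) (Finset.mem_univ j)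
        _ = 1 := hz.2
    calc ∑ js : Fin p → Fin n, ∏ j, z (js j) ≤ ∑ _js : Fin p → Fin n, (1:ℝ) :=
          Finset.sum_le_sum fun js _ => Finset.prod_le_one (fun j _ => hz.1 _) (fun j _ => hz1 _)
      _ = K := by rw [hKdef]; simp
  have heiglimit : ∀ i, tapp p n B l.2 i = l.1 * l.2 i ^ p := by
    intro i
    have hseq : ∀ j, tapp p n B (xx (φ j)) i
        + ep (φ j) * ∑ js : Fin p → Fin n, ∏ j', xx (φ j) (js j')
        = lam (φ j) * xx (φ j) i ^ p := by
      intro j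
      rw [← tapp_addconst B (ep (φ j)) (xx (φ j)) i]
      exact heig (φ j) i
    have ht1 : Tendsto (fun j => tapp p n B (xx (φ j)) i) atTop (𝓝 (tapp p n B l.2 i)) :=
      ((tapp_cont B i).tendsto l.2).comp htx
    have ht2 : Tendsto (fun j => ep (φ j) * ∑ js : Fin p → Fin n, ∏ j', xx (φ j) (js j'))
        atTop (𝓝 0) := by
      have hup : Tendsto (fun j => ep (φ j) * K) atTop (𝓝 0) := by
        have h0 : Tendsto (fun k : ℕ => ep k) atTop (𝓝 0) :=
          tendsto_one_div_add_atTop_nhds_zero_nat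
        have := (h0.comp hφtop).mul_const K
        simpa using this
      refine squeeze_zero (fun j => ?_) (fun j => ?_) hup
      · exact mul_nonneg (hep_pos _).le (hPnonneg _ fun i' => (hxΔ _).1 i')
      · exact mul_le_mul_of_nonneg_left (hPbound _ (hxΔ _)) (hep_pos _).le
    have ht3 : Tendsto (fun j => lam (φ j) * xx (φ j) i ^ p) atTop (𝓝 (l.1 * l.2 i ^ p)) := by
      refine htlam.mul ?_
      exact (((continuous_apply i).tendsto l.2).comp htx).pow p
    have ht4 : Tendsto (fun j => tapp p n B (xx (φ j)) i
        + ep (φ j) * ∑ js : Fin p → Fin n, ∏ j', xx (φ j) (js j'))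
        atTop (𝓝 (tapp p n B l.2 i + 0)) := ht1.add ht2
    have := tendsto_nhds_unique (ht4.congr hseq) ht3
    rw [add_zero] at this
    linarith [this]
  have hx2 : l.2 ∈ stdSimplex ℝ (Fin n) := hlP.2
  have h5 : |l.1| ≤ tensorSpecRad p n B := specRad_ge B (simplex_ne_zero hx2) heiglimit
  have h6 : s ≤ l.1 := hlP.1.1
  calc s ≤ l.1 := h6
    _ ≤ |l.1| := le_abs_self _
    _ ≤ tensorSpecRad p n B := h5

lemma existence (hp : p ≠ 0) (hn : 0 < n) (B : Fin n → (Fin p → Fin n) → ℝ)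
    (hB : ∀ i js, 0 ≤ B i js) {s : ℝ} (hs : 0 < s) (hρ : tensorSpecRad p n B < s)
    {b : Fin n → ℝ} (hb : ∀ i, 0 < b i) :
    ∃ x : Fin n → ℝ, (∀ i, 0 < x i) ∧ ∀ i, s * x i ^ p = b i + tapp p n B x i := by
  set T : (Fin n → ℝ) → (Fin n → ℝ) :=
    fun z i => ((b i + tapp p n B z i) / s) ^ ((p:ℝ)⁻¹) with hTdef
  set xs : ℕ → (Fin n → ℝ) := fun k => T^[k] (fun _ => 0) with hxsdef
  have hsucc : ∀ k, xs (k+1) = T (xs k) := by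
    intro k
    rw [hxsdef]
    simp [Function.iterate_succ_apply']
  have hTnonneg : ∀ z, (∀ i, 0 ≤ z i) → ∀ i, 0 ≤ T z i := by
    intro z hz i
    refine Real.rpow_nonneg (div_nonneg ?_ hs.le) _
    have := tapp_nonneg hB hz i
    linarith [(hb i).le]
  have h0 : ∀ k i, 0 ≤ xs k i := by
    intro k
    induction k with
    | zero => intro i; simp [hxsdef]
    | succ k ih =>
      rw [hsucc k]
      intro i
      refine Real.rpow_nonneg (div_nonneg ?_ hs.le) _
      have := tapp_nonneg hB ih i
      linarith [(hb i).le]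
  have hTpos : ∀ z, (∀ i, 0 ≤ z i) → ∀ i, 0 < T z i := by
    intro z hz i
    refine Real.rpow_pos_of_pos (div_pos ?_ hs) _
    have := tapp_nonneg hB hz i
    linarith [hb i]
  have heq : ∀ k i, s * xs (k+1) i ^ p = b i + tapp p n B (xs k) i := by
    intro k i
    rw [hsucc k]
    have hnn : 0 ≤ (b i + tapp p n B (xs k) i) / s := by
      have := tapp_nonneg hB (h0 k) i
      have hbi := (hb i).le
      exact div_nonneg (by linarith) hs.le
    show s * (((b i + tapp p n B (xs k) i) / s) ^ ((p:ℝ)⁻¹)) ^ p = _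
    rw [Real.rpow_inv_natCast_pow hnn hp, mul_div_cancel₀ _ hs.ne']
  have hTmono : ∀ z w, (∀ i, 0 ≤ z i) → (∀ i, z i ≤ w i) → ∀ i, T z i ≤ T w i := by
    intro z w hz hzw i
    refine Real.rpow_le_rpow (div_nonneg ?_ hs.le) ?_ (by positivity)
    · have := tapp_nonneg hB hz i; linarith [(hb i).le]
    · have h1 := tapp_mono hB hz hzw i
      exact (div_le_div_iff_of_pos_right hs).mpr (by linarith)
  have hmonostep : ∀ k i, xs k i ≤ xs (k+1) i := by
    intro k
    induction k with
    | zero =>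
      intro i
      have : xs 0 i = 0 := by simp [hxsdef]
      rw [this, hsucc 0]
      exact hTnonneg _ (h0 0) i
    | succ k ih =>
      intro i
      have h := hTmono (xs k) (xs (k+1)) (h0 k) ih i
      rwa [← hsucc k, ← hsucc (k+1)] at h
  have hmonoc : ∀ i, Monotone fun k => xs k i :=
    fun i => monotone_nat_of_le_succ fun k => hmonostep k i
  by_cases hbdd : ∃ R : ℝ, ∀ k i, xs k i ≤ R
  · -- bounded: converge to the solution
    obtain ⟨R, hR⟩ := hbdd
    set xl : Fin n → ℝ := fun i => ⨆ k, xs k i with hxldef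
    have htendc : ∀ i, Tendsto (fun k => xs k i) atTop (𝓝 (xl i)) := by
      intro i
      exact tendsto_atTop_ciSup (hmonoc i) ⟨R, by rintro r ⟨k, rfl⟩; exact hR k i⟩
    have htend : Tendsto xs atTop (𝓝 xl) := tendsto_pi_nhds.mpr htendc
    have hxl1 : ∀ i, xs 1 i ≤ xl i := by
      intro i
      exact le_ciSup ⟨R, by rintro r ⟨k, rfl⟩; exact hR k i⟩ 1
    have hxlpos : ∀ i, 0 < xl i := by
      intro i
      refine lt_of_lt_of_le ?_ (hxl1 i)
      have : xs 1 = T (xs 0) := hsucc 0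
      rw [this]
      exact hTpos _ (h0 0) i
    refine ⟨xl, hxlpos, fun i => ?_⟩
    have hL : Tendsto (fun k => s * xs (k+1) i ^ p) atTop (𝓝 (s * xl i ^ p)) := by
      have h1 : Tendsto (fun k => xs (k+1) i) atTop (𝓝 (xl i)) :=
        (htendc i).comp (tendsto_add_atTop_nat 1)
      exact (h1.pow p).const_mul s
    have hRt : Tendsto (fun k => b i + tapp p n B (xs k) i) atTop
        (𝓝 (b i + tapp p n B xl i)) :=
      tendsto_const_nhds.add (((tapp_cont B i).tendsto xl).comp htend)
    exact tendsto_nhds_unique (hL.congr fun k => heq k i) hRt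
  · -- unbounded: contradiction with the spectral radius
    exfalso
    push_neg at hbdd
    have hsub : ∀ k i, s * xs (k+1) i ^ p ≤ b i + tapp p n B (xs (k+1)) i := by
      intro k i
      rw [heq k i]
      have := tapp_mono hB (h0 k) (hmonostep k) i
      linarith
    have hZ : ∀ j : ℕ, ∃ z : Fin n → ℝ, (∀ i, 0 ≤ z i) ∧
        (∀ i, s * z i ^ p ≤ b i + tapp p n B z i) ∧ (j : ℝ) + 1 < ∑ i, z i := by
      intro j
      obtain ⟨k, i, hki⟩ := hbdd ((j : ℝ) + 1)
      refine ⟨xs (k+1), h0 (k+1), hsub k, ?_⟩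
      calc (j:ℝ) + 1 < xs k i := hki
        _ ≤ xs (k+1) i := hmonostep k i
        _ ≤ ∑ i', xs (k+1) i' :=
          Finset.single_le_sum (fun i' _ => h0 (k+1) i') (Finset.mem_univ i)
    choose z hz0 hzineq hzbig using hZ
    set σ : ℕ → ℝ := fun j => ∑ i, z j i with hσdef
    have hσpos : ∀ j, 0 < σ j := fun j => lt_trans (by positivity) (hzbig j)
    set v : ℕ → Fin n → ℝ := fun j i => (σ j)⁻¹ * z j i with hvdef
    have hvΔ : ∀ j, v j ∈ stdSimplex ℝ (Fin n) := by
      intro j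
      refine ⟨fun i => mul_nonneg (inv_nonneg.mpr (hσpos j).le) (hz0 j i), ?_⟩
      show (∑ i, (σ j)⁻¹ * z j i) = 1
      rw [← Finset.mul_sum]
      exact inv_mul_cancel₀ (hσpos j).ne'
    have hvineq : ∀ j i, s * v j i ^ p ≤ ((σ j)⁻¹) ^ p * b i + tapp p n B (v j) i := by
      intro j i
      have h1 : tapp p n B (v j) i = ((σ j)⁻¹) ^ p * tapp p n B (z j) i := tapp_smul B (z j) _ i
      have h2 : s * v j i ^ p = ((σ j)⁻¹) ^ p * (s * z j i ^ p) := by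
        rw [hvdef]; simp only [mul_pow]; ring
      rw [h1, h2]
      have h3 := mul_le_mul_of_nonneg_left (hzineq j i)
        (pow_nonneg (inv_nonneg.mpr (hσpos j).le) p)
      linarith
    obtain ⟨vl, hvlΔ, φ, hφ, htend⟩ := (isCompact_stdSimplex ℝ (Fin n)).tendsto_subseq hvΔ
    have hφtop : Tendsto φ atTop atTop := hφ.tendsto_atTop
    have hσinv0 : Tendsto (fun t => ((σ (φ t))⁻¹) ^ p) atTop (𝓝 0) := by
      have h1 : Tendsto (fun t : ℕ => (σ (φ t))⁻¹) atTop (𝓝 0) := by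
        refine squeeze_zero (g := fun t : ℕ => 1 / ((t:ℝ)+1)) (fun t => inv_nonneg.mpr (hσpos _).le) (fun t => ?_) ?_
        · show (σ (φ t))⁻¹ ≤ 1 / ((t:ℝ) + 1)
          rw [one_div]
          refine inv_anti₀ (by positivity) ?_
          calc (t:ℝ) + 1 ≤ (φ t : ℝ) + 1 := by
                have h1 : t ≤ φ t := hφ.le_apply
                have h2 : (t:ℝ) ≤ (φ t : ℝ) := by exact_mod_cast h1
                linarith
            _ ≤ σ (φ t) := (hzbig (φ t)).le
        · exact tendsto_one_div_add_atTop_nhds_zero_nat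
      have := h1.pow p
      rwa [zero_pow hp] at this
    have hlimineq : ∀ i, s * vl i ^ p ≤ tapp p n B vl i := by
      intro i
      have hF : Tendsto (fun t => s * v (φ t) i ^ p) atTop (𝓝 (s * vl i ^ p)) :=
        ((((continuous_apply i).tendsto vl).comp htend).pow p).const_mul s
      have hG : Tendsto (fun t => ((σ (φ t))⁻¹) ^ p * b i + tapp p n B (v (φ t)) i) atTop
          (𝓝 (0 * b i + tapp p n B vl i)) :=
        (hσinv0.mul_const (b i)).add (((tapp_cont B i).tendsto vl).comp htend)
      have := le_of_tendsto_of_tendsto' hF hG (fun t => hvineq (φ t) i)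
      rw [zero_mul, zero_add] at this
      exact this
    have hvl0 : vl ≠ 0 := by
      intro h
      have h1 : (1:ℝ) = 0 := by
        rw [← hvlΔ.2, h]
        simp
      norm_num at h1
    have := subeigen_specRad hp hn B hB hs hvlΔ.1 hvl0 hlimineq
    linarith


lemma sol_le (hp : p ≠ 0) {B : Fin n → (Fin p → Fin n) → ℝ} (hB : ∀ i js, 0 ≤ B i js)
    {s : ℝ} (hs : 0 < s) {b : Fin n → ℝ} (hb : ∀ i, 0 < b i)
    {u w : Fin n → ℝ} (hu : ∀ i, 0 < u i) (hw : ∀ i, 0 < w i)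
    (hue : ∀ i, s * u i ^ p = b i + tapp p n B u i)
    (hwe : ∀ i, s * w i ^ p = b i + tapp p n B w i) : ∀ i, w i ≤ u i := by
  intro i
  haveI : Nonempty (Fin n) := ⟨i⟩
  obtain ⟨i0, -, hmax⟩ := Finset.exists_max_image Finset.univ (fun i' => w i' / u i')
    Finset.univ_nonempty
  set t : ℝ := w i0 / u i0 with htdef
  have ht0 : 0 < t := div_pos (hw i0) (hu i0)
  have hwle : ∀ i', w i' ≤ t * u i' := by
    intro i'
    have := hmax i' (Finset.mem_univ i')
    calc w i' = w i' / u i' * u i' := by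
          rw [div_mul_cancel₀ _ (hu i').ne']
      _ ≤ t * u i' := mul_le_mul_of_nonneg_right this (hu i').le
  have ht1 : t ≤ 1 := by
    by_contra hlt
    push_neg at hlt
    have hwi0 : w i0 = t * u i0 := by rw [htdef, div_mul_cancel₀ _ (hu i0).ne']
    have h1 : s * w i0 ^ p ≤ b i0 + t ^ p * tapp p n B u i0 := by
      rw [hwe i0]
      have h2 : tapp p n B w i0 ≤ tapp p n B (fun i' => t * u i') i0 :=
        tapp_mono hB (fun i' => (hw i').le) hwle i0
      rw [tapp_smul B u t i0] at h2
      linarith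
    have h3 : s * w i0 ^ p = t ^ p * (b i0 + tapp p n B u i0) := by
      rw [hwi0, mul_pow, ← hue i0]
      ring
    have h4 : t ^ p * b i0 ≤ b i0 := by
      rw [h3] at h1
      linarith
    have h5 : 1 < t ^ p := one_lt_pow₀ hlt hp
    nlinarith [hb i0]
  calc w i ≤ t * u i := hwle i
    _ ≤ 1 * u i := mul_le_mul_of_nonneg_right ht1 (hu i).le
    _ = u i := one_mul _

lemma uniq (hp : p ≠ 0) {B : Fin n → (Fin p → Fin n) → ℝ} (hB : ∀ i js, 0 ≤ B i js)
    {s : ℝ} (hs : 0 < s) {b : Fin n → ℝ} (hb : ∀ i, 0 < b i)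
    {x : Fin n → ℝ} (hx : ∀ i, 0 < x i) (hxe : ∀ i, s * x i ^ p = b i + tapp p n B x i)
    {y : Fin n → ℝ} (hy : ∀ i, 0 ≤ y i) (hye : ∀ i, s * y i ^ p = b i + tapp p n B y i) :
    y = x := by
  have hypos : ∀ i, 0 < y i := by
    intro i
    rcases lt_or_eq_of_le (hy i) with h | h
    · exact h
    · exfalso
      have h1 : s * y i ^ p = 0 := by rw [← h, zero_pow hp, mul_zero]
      have h2 := tapp_nonneg hB hy i
      have := hye i
      nlinarith [hb i]
  funext i
  exact le_antisymm (sol_le hp hB hs hb hx hypos hxe hye i)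
    (sol_le hp hB hs hb hypos hx hye hxe i)

end Aux

/-- for a nonsingular M-tensor and `b > 0`, the equation `A x^{m-1} = b`
has a positive solution which is the only nonnegative solution. -/
theorem stmt17 (m n : ℕ) (hm : 2 ≤ m) (A : Fin n → (Fin (m-1) → Fin n) → ℝ)
    (hA : IsMTensor (m-1) n A) (b : Fin n → ℝ) (hb : ∀ i, 0 < b i) :
    ∃ x : Fin n → ℝ, (∀ i, 0 < x i) ∧ tapp (m-1) n A x = b ∧
      ∀ y : Fin n → ℝ, 0 ≤ y → tapp (m-1) n A y = b → y = x := by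
  obtain ⟨s, B, hB, hρ, hAeq⟩ := hA
  have hp : m - 1 ≠ 0 := by omega
  rcases Nat.eq_zero_or_pos n with hn | hn
  · subst hn
    exact ⟨fun i => 1, fun i => i.elim0, funext fun i => i.elim0,
      fun y _ _ => funext fun i => i.elim0⟩
  have hρ0 : 0 ≤ tensorSpecRad (m-1) n B := by
    refine Real.sSup_nonneg ?_
    rintro r ⟨lam, x, -, -, rfl⟩
    exact abs_nonneg _
  have hs : 0 < s := lt_of_le_of_lt hρ0 hρ
  obtain ⟨x, hxpos, hxeq⟩ := Aux.existence hp hn B hB hs hρ hb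
  refine ⟨x, hxpos, ?_, ?_⟩
  · funext i
    rw [Aux.tapp_decomp hAeq x i]
    linarith [hxeq i]
  · intro y hy hye
    have hy' : ∀ i, 0 ≤ y i := fun i => hy i
    have hye' : ∀ i, s * y i ^ (m-1) = b i + tapp (m-1) n B y i := by
      intro i
      have h1 := congrFun hye i
      rw [Aux.tapp_decomp hAeq y i] at h1
      linarith
    exact Aux.uniq hp hB hs hb hxpos hxeq hy' hye'

end
end
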